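/- arXiv:2405.09500 — 10 statements merged into one kernel-verified Lean document; each statement's English description precedes it below -/
import Mathlib

section
/- For convex capacities ν and ν' on a finite set X and α ∈ [0,1], the core of the mixture αν + (1-α)ν' equals the Minkowski mixture α·core(ν) + (1-α)·core(ν'). -/
open Finset

variable {X : Type*} [Fintype X] [DecidableEq X]

/-- Total mass of `p` on a finite subset `K`. -/
def mass (p : X → ℝ) (K : Finset X) : ℝ := ∑ a ∈ K, p a

/-- `p` is a probability mass function on `X`. -/
def IsProb (p : X → ℝ) : Prop := (∀ a, 0 ≤ p a) ∧ ∑ a, p a = 1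

/-- A capacity on the finite set `X`: normalized and monotone set function. -/
def IsCapacity (ν : Finset X → ℝ) : Prop :=
  ν ∅ = 0 ∧ ν Finset.univ = 1 ∧ ∀ ⦃A B : Finset X⦄, A ⊆ B → ν A ≤ ν B

/-- A convex (supermodular) capacity. -/
def IsConvexCap (ν : Finset X → ℝ) : Prop :=
  IsCapacity ν ∧ ∀ A B : Finset X, ν A + ν B ≤ ν (A ∪ B) + ν (A ∩ B)

/-- The core of a capacity: all dominating probability measures. -/
def core (ν : Finset X → ℝ) : Set (X → ℝ) :=
  {p | IsProb p ∧ ∀ K : Finset X, ν K ≤ mass p K}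

set_option linter.unusedSectionVars false in
lemma sandwich : ∀ (S : Finset X) (f g : Finset X → ℝ),
    (∀ A B, A ⊆ S → B ⊆ S → f (A ∪ B) + f (A ∩ B) ≤ f A + f B) →
    (∀ A B, A ⊆ S → B ⊆ S → g A + g B ≤ g (A ∪ B) + g (A ∩ B)) →
    (∀ K, K ⊆ S → g K ≤ f K) →
    ∃ c : ℝ, ∃ w : X → ℝ, ∀ K, K ⊆ S →
      g K ≤ c + ∑ a ∈ K, w a ∧ c + ∑ a ∈ K, w a ≤ f K := by
  intro S
  induction S using Finset.induction_on with
  | empty =>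
      intro f g _ _ hgf
      refine ⟨g ∅, 0, ?_⟩
      intro K hK
      rw [Finset.subset_empty] at hK; subst hK
      simpa using hgf ∅ (by simp)
  | @insert x S hx IH =>
      intro f g hf hg hgf
      have hsub : ∀ K : Finset X, K ⊆ S → K ⊆ insert x S :=
        fun K h => h.trans (Finset.subset_insert _ _)
      have hxK : ∀ K : Finset X, K ⊆ S → x ∉ K := fun K h hxk => hx (h hxk)
      set t : ℝ := (S.powerset).inf' ⟨∅, Finset.mem_powerset.mpr (Finset.empty_subset S)⟩
        (fun K => f (insert x K) - g K) with ht
      have key1 : ∀ K, K ⊆ S → t ≤ f (insert x K) - g K := fun K h =>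
        Finset.inf'_le _ (Finset.mem_powerset.mpr h)
      have key2 : ∀ K, K ⊆ S → g (insert x K) - f K ≤ t := by
        intro K hK
        apply Finset.le_inf'
        intro K' hK'
        rw [Finset.mem_powerset] at hK'
        have h1 := hg (insert x K) K' (Finset.insert_subset_insert x hK) (hsub _ hK')
        rw [Finset.insert_union, Finset.insert_inter_of_notMem (hxK K' hK')] at h1
        have h3 := hf K (insert x K') (hsub _ hK) (Finset.insert_subset_insert x hK')
        rw [Finset.union_insert, Finset.inter_insert_of_notMem (hxK K hK)] at h3
        have h2a := hgf (insert x (K ∪ K'))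
          (Finset.insert_subset_insert x (Finset.union_subset hK hK'))
        have h2b := hgf (K ∩ K') (hsub _ ((Finset.inter_subset_left).trans hK))
        linarith
      set F : Finset X → ℝ := fun K => min (f K) (f (insert x K) - t) with hF
      set G : Finset X → ℝ := fun K => max (g K) (g (insert x K) - t) with hG
      have huu : ∀ A B : Finset X, insert x A ∪ insert x B = insert x (A ∪ B) := by
        intro A B; ext y; simp only [Finset.mem_union, Finset.mem_insert]; tauto
      have hii : ∀ A B : Finset X, A ⊆ S → B ⊆ S →
          insert x A ∩ insert x B = insert x (A ∩ B) := by
        intro A B hA hB; ext y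
        simp only [Finset.mem_inter, Finset.mem_insert]
        tauto
      have hFsub : ∀ A B, A ⊆ S → B ⊆ S → F (A ∪ B) + F (A ∩ B) ≤ F A + F B := by
        intro A B hA hB
        have hAx := Finset.insert_subset_insert x hA
        have hBx := Finset.insert_subset_insert x hB
        have hA' := hsub _ hA; have hB' := hsub _ hB
        rcases min_cases (f A) (f (insert x A) - t) with ⟨e1, _⟩ | ⟨e1, _⟩ <;>
          rcases min_cases (f B) (f (insert x B) - t) with ⟨e2, _⟩ | ⟨e2, _⟩ <;>
          simp only [hF] <;> rw [e1, e2]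
        · have := hf A B hA' hB'
          have l1 : min (f (A ∪ B)) (f (insert x (A ∪ B)) - t) ≤ f (A ∪ B) := min_le_left _ _
          have l2 : min (f (A ∩ B)) (f (insert x (A ∩ B)) - t) ≤ f (A ∩ B) := min_le_left _ _
          linarith
        · have h3 := hf A (insert x B) hA' hBx
          rw [Finset.union_insert, Finset.inter_insert_of_notMem (hxK A hA)] at h3
          have l1 : min (f (A ∪ B)) (f (insert x (A ∪ B)) - t) ≤ f (insert x (A ∪ B)) - t :=
            min_le_right _ _
          have l2 : min (f (A ∩ B)) (f (insert x (A ∩ B)) - t) ≤ f (A ∩ B) := min_le_left _ _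
          linarith
        · have h3 := hf (insert x A) B hAx hB'
          rw [Finset.insert_union, Finset.insert_inter_of_notMem (hxK B hB)] at h3
          have l1 : min (f (A ∪ B)) (f (insert x (A ∪ B)) - t) ≤ f (insert x (A ∪ B)) - t :=
            min_le_right _ _
          have l2 : min (f (A ∩ B)) (f (insert x (A ∩ B)) - t) ≤ f (A ∩ B) := min_le_left _ _
          linarith
        · have h3 := hf (insert x A) (insert x B) hAx hBx
          rw [huu A B, hii A B hA hB] at h3
          have l1 : min (f (A ∪ B)) (f (insert x (A ∪ B)) - t) ≤ f (insert x (A ∪ B)) - t :=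
            min_le_right _ _
          have l2 : min (f (A ∩ B)) (f (insert x (A ∩ B)) - t) ≤ f (insert x (A ∩ B)) - t :=
            min_le_right _ _
          linarith
      have hGsup : ∀ A B, A ⊆ S → B ⊆ S → G A + G B ≤ G (A ∪ B) + G (A ∩ B) := by
        intro A B hA hB
        have hAx := Finset.insert_subset_insert x hA
        have hBx := Finset.insert_subset_insert x hB
        have hA' := hsub _ hA; have hB' := hsub _ hB
        rcases max_cases (g A) (g (insert x A) - t) with ⟨e1, _⟩ | ⟨e1, _⟩ <;>
          rcases max_cases (g B) (g (insert x B) - t) with ⟨e2, _⟩ | ⟨e2, _⟩ <;>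
          simp only [hG] <;> rw [e1, e2]
        · have := hg A B hA' hB'
          have l1 : g (A ∪ B) ≤ max (g (A ∪ B)) (g (insert x (A ∪ B)) - t) := le_max_left _ _
          have l2 : g (A ∩ B) ≤ max (g (A ∩ B)) (g (insert x (A ∩ B)) - t) := le_max_left _ _
          linarith
        · have h3 := hg A (insert x B) hA' hBx
          rw [Finset.union_insert, Finset.inter_insert_of_notMem (hxK A hA)] at h3
          have l1 : g (insert x (A ∪ B)) - t ≤ max (g (A ∪ B)) (g (insert x (A ∪ B)) - t) :=
            le_max_right _ _
          have l2 : g (A ∩ B) ≤ max (g (A ∩ B)) (g (insert x (A ∩ B)) - t) := le_max_left _ _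
          linarith
        · have h3 := hg (insert x A) B hAx hB'
          rw [Finset.insert_union, Finset.insert_inter_of_notMem (hxK B hB)] at h3
          have l1 : g (insert x (A ∪ B)) - t ≤ max (g (A ∪ B)) (g (insert x (A ∪ B)) - t) :=
            le_max_right _ _
          have l2 : g (A ∩ B) ≤ max (g (A ∩ B)) (g (insert x (A ∩ B)) - t) := le_max_left _ _
          linarith
        · have h3 := hg (insert x A) (insert x B) hAx hBx
          rw [huu A B, hii A B hA hB] at h3
          have l1 : g (insert x (A ∪ B)) - t ≤ max (g (A ∪ B)) (g (insert x (A ∪ B)) - t) :=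
            le_max_right _ _
          have l2 : g (insert x (A ∩ B)) - t ≤ max (g (A ∩ B)) (g (insert x (A ∩ B)) - t) :=
            le_max_right _ _
          linarith
      have hGF : ∀ K, K ⊆ S → G K ≤ F K := by
        intro K hK
        apply max_le
        · exact le_min (hgf K (hsub _ hK)) (by linarith [key1 K hK])
        · refine le_min (by linarith [key2 K hK]) ?_
          have := hgf (insert x K) (Finset.insert_subset_insert x hK)
          linarith
      obtain ⟨c, w, hw⟩ := IH F G hFsub hGsup hGF
      refine ⟨c, Function.update w x t, ?_⟩
      intro K hK
      by_cases hxmem : x ∈ K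
      · set K' := K.erase x with hK'def
        have hK'S : K' ⊆ S := Finset.subset_insert_iff.mp hK
        have hKe : K = insert x K' := (Finset.insert_erase hxmem).symm
        have hsum : ∑ a ∈ K, Function.update w x t a = t + ∑ a ∈ K', w a := by
          rw [hKe, Finset.sum_insert (Finset.notMem_erase x K)]
          congr 1
          · simp
          · apply Finset.sum_congr rfl
            intro a ha
            exact Function.update_of_ne (fun h => hxK K' hK'S (by rw [← h]; exact ha)) _ _
        obtain ⟨h1, h2⟩ := hw K' hK'S
        have l1 : g (insert x K') - t ≤ G K' := le_max_right _ _
        have l2 : F K' ≤ f (insert x K') - t := min_le_right _ _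
        rw [hKe, ← Finset.insert_erase hxmem] at *
        constructor
        · rw [hsum]; rw [hKe] at *; linarith
        · rw [hsum]; rw [hKe] at *; linarith
      · have hKS : K ⊆ S := by
          intro a ha
          rcases Finset.mem_insert.mp (hK ha) with rfl | h
          · exact absurd ha hxmem
          · exact h
        have hsum : ∑ a ∈ K, Function.update w x t a = ∑ a ∈ K, w a := by
          apply Finset.sum_congr rfl
          intro a ha
          exact Function.update_of_ne (fun h => hxmem (by rw [← h]; exact ha)) _ _
        obtain ⟨h1, h2⟩ := hw K hKS
        have l1 : g K ≤ G K := le_max_left _ _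
        have l2 : F K ≤ f K := min_le_left _ _
        rw [hsum]
        constructor <;> linarith

lemma core_nonempty (ν : Finset X → ℝ) (hν : IsConvexCap ν) : ∃ p, p ∈ core ν := by
  obtain ⟨⟨h0, h1, hmono⟩, hsup⟩ := hν
  have huniv : (Finset.univ : Finset X) ≠ ∅ := by
    intro h; rw [h, h0] at h1; norm_num at h1
  set f : Finset X → ℝ := fun K => if K = ∅ then 0 else 1 with hfdef
  have hfb : ∀ K : Finset X, 0 ≤ f K ∧ f K ≤ 1 := by
    intro K; simp only [hfdef]; split <;> norm_num
  have hfsub : ∀ A B : Finset X, A ⊆ Finset.univ → B ⊆ Finset.univ →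
      f (A ∪ B) + f (A ∩ B) ≤ f A + f B := by
    intro A B _ _
    by_cases hA : A = ∅
    · subst hA; simp [hfdef]
    by_cases hB : B = ∅
    · subst hB; simp [hfdef]
    have : f A = 1 := by simp [hfdef, hA]
    have : f B = 1 := by simp [hfdef, hB]
    have hAB : A ∪ B ≠ ∅ := by
      intro h; exact hA (Finset.union_eq_empty.mp h).1
    have : f (A ∪ B) = 1 := by simp [hfdef, hAB]
    have := (hfb (A ∩ B)).2
    simp_all
  have hgf : ∀ K : Finset X, K ⊆ Finset.univ → ν K ≤ f K := by
    intro K _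
    by_cases hK : K = ∅
    · subst hK; simp [hfdef, h0]
    · have : ν K ≤ ν Finset.univ := hmono (Finset.subset_univ K)
      simp [hfdef, hK]; linarith
  obtain ⟨c, w, hw⟩ := sandwich Finset.univ f ν hfsub
    (fun A B _ _ => hsup A B) hgf
  have hc : c = 0 := by
    have := hw ∅ (Finset.empty_subset _)
    simp [hfdef, h0] at this
    linarith [this.1, this.2]
  refine ⟨w, ⟨⟨?_, ?_⟩, ?_⟩⟩
  · intro a
    have := (hw {a} (Finset.subset_univ _)).1
    have hm : ν ∅ ≤ ν {a} := hmono (Finset.empty_subset _)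
    simp [hc] at this
    linarith [h0 ▸ hm]
  · have h2 := hw Finset.univ (Finset.subset_univ _)
    have : f Finset.univ = 1 := by simp [hfdef, huniv]
    rw [hc, this, h1] at h2
    linarith [h2.1, h2.2]
  · intro K
    have := (hw K (Finset.subset_univ _)).1
    rw [hc] at this
    simpa [mass] using this

/-- The core of a mixture of convex capacities equals the mixture of the cores. -/
theorem stmt0 (ν ν' : Finset X → ℝ) (hν : IsConvexCap ν) (hν' : IsConvexCap ν')
    (α : ℝ) (hα : α ∈ Set.Icc (0:ℝ) 1) :
    core (fun K => α * ν K + (1 - α) * ν' K) =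
      {r | ∃ p ∈ core ν, ∃ q ∈ core ν', r = fun a => α * p a + (1 - α) * q a} := by
  obtain ⟨hα0, hα1⟩ := hα
  obtain ⟨⟨h0, h1, hmono⟩, hsup⟩ := hν
  obtain ⟨⟨h0', h1', hmono'⟩, hsup'⟩ := hν'
  have hνpos : ∀ K : Finset X, 0 ≤ ν K := fun K => h0 ▸ hmono (Finset.empty_subset K)
  have hν'pos : ∀ K : Finset X, 0 ≤ ν' K := fun K => h0' ▸ hmono' (Finset.empty_subset K)
  ext r
  simp only [core, Set.mem_setOf_eq]
  constructor
  · rintro ⟨⟨hrpos, hrsum⟩, hrdom⟩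
    rcases eq_or_lt_of_le hα0 with hz | hz
    · -- α = 0
      obtain ⟨p, hp⟩ := core_nonempty ν ⟨⟨h0, h1, hmono⟩, hsup⟩
      refine ⟨p, hp, r, ⟨⟨hrpos, hrsum⟩, ?_⟩, ?_⟩
      · intro K
        have := hrdom K
        rw [← hz] at this
        simpa using this
      · funext a; rw [← hz]; ring
    rcases eq_or_lt_of_le hα1 with ho | ho
    · -- α = 1
      obtain ⟨q, hq⟩ := core_nonempty ν' ⟨⟨h0', h1', hmono'⟩, hsup'⟩
      refine ⟨r, ⟨⟨hrpos, hrsum⟩, ?_⟩, q, hq, ?_⟩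
      · intro K
        have := hrdom K
        rw [ho] at this
        simpa using this
      · funext a; rw [ho]; ring
    -- 0 < α < 1
    have h1α : (0:ℝ) < 1 - α := by linarith
    set f : Finset X → ℝ := fun K => mass r K - (1 - α) * ν' K with hfdef
    set g : Finset X → ℝ := fun K => α * ν K with hgdef
    have hmadd : ∀ A B : Finset X, mass r (A ∪ B) + mass r (A ∩ B) = mass r A + mass r B := by
      intro A B
      simp only [mass]
      exact Finset.sum_union_inter
    have hfsub : ∀ A B : Finset X, A ⊆ Finset.univ → B ⊆ Finset.univ →
        f (A ∪ B) + f (A ∩ B) ≤ f A + f B := by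
      intro A B _ _
      simp only [hfdef]
      have h := mul_le_mul_of_nonneg_left (hsup' A B) (le_of_lt h1α)
      have := hmadd A B
      nlinarith [h]
    have hgsup : ∀ A B : Finset X, A ⊆ Finset.univ → B ⊆ Finset.univ →
        g A + g B ≤ g (A ∪ B) + g (A ∩ B) := by
      intro A B _ _
      simp only [hgdef]
      nlinarith [mul_le_mul_of_nonneg_left (hsup A B) (le_of_lt hz)]
    have hgfle : ∀ K : Finset X, K ⊆ Finset.univ → g K ≤ f K := by
      intro K _
      simp only [hfdef, hgdef]
      linarith [hrdom K]
    obtain ⟨c, w, hw⟩ := sandwich Finset.univ f g hfsub hgsup hgfle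
    have hc : c = 0 := by
      have := hw ∅ (Finset.empty_subset _)
      simp [hfdef, hgdef, mass, h0, h0'] at this
      linarith [this.1, this.2]
    rw [hc] at hw
    simp only [zero_add] at hw
    have hwlow : ∀ K : Finset X, α * ν K ≤ ∑ a ∈ K, w a := fun K =>
      (hw K (Finset.subset_univ _)).1
    have hwhigh : ∀ K : Finset X, ∑ a ∈ K, w a ≤ mass r K - (1 - α) * ν' K := fun K =>
      (hw K (Finset.subset_univ _)).2
    have hsumw : ∑ a, w a = α := by
      have hu1 := hwlow Finset.univ
      rw [h1, mul_one] at hu1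
      have hu2 := hwhigh Finset.univ
      rw [h1'] at hu2
      have hm1 : mass r Finset.univ = 1 := hrsum
      rw [hm1] at hu2
      linarith
    refine ⟨fun a => w a / α, ⟨⟨?_, ?_⟩, ?_⟩, fun a => (r a - w a) / (1 - α),
      ⟨⟨?_, ?_⟩, ?_⟩, ?_⟩
    · intro a
      have hl := hwlow {a}
      simp only [Finset.sum_singleton] at hl
      have h2 := mul_nonneg (le_of_lt hz) (hνpos {a})
      exact div_nonneg (by linarith) hz.le
    · rw [← Finset.sum_div, hsumw, div_self hz.ne']
    · intro K
      simp only [mass, ← Finset.sum_div]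
      rw [le_div_iff₀ hz]
      linarith [hwlow K]
    · intro a
      have hh := hwhigh {a}
      simp only [Finset.sum_singleton, mass] at hh
      have := mul_nonneg (le_of_lt h1α) (hν'pos {a})
      have : 0 ≤ r a - w a := by linarith
      positivity
    · rw [← Finset.sum_div, Finset.sum_sub_distrib, hrsum, hsumw, div_self h1α.ne']
    · intro K
      simp only [mass, ← Finset.sum_div, Finset.sum_sub_distrib]
      rw [le_div_iff₀ h1α]
      have := hwhigh K
      simp only [mass] at this
      linarith
    · funext a
      field_simp
      ring
  · rintro ⟨p, ⟨⟨hp, hpsum⟩, hpdom⟩, q, ⟨⟨hq, hqsum⟩, hqdom⟩, rfl⟩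
    refine ⟨⟨fun a => ?_, ?_⟩, fun K => ?_⟩
    · exact add_nonneg (mul_nonneg hα0 (hp a)) (mul_nonneg (by linarith) (hq a))
    · simp only [Finset.sum_add_distrib, ← Finset.mul_sum, hpsum, hqsum]
      ring
    · simp only [mass, Finset.sum_add_distrib, ← Finset.mul_sum]
      have := mul_le_mul_of_nonneg_left (hpdom K) hα0
      have := mul_le_mul_of_nonneg_left (hqdom K) (by linarith : (0:ℝ) ≤ 1 - α)
      simp only [mass] at *
      linarith
end

section
/- If ν is a convex capacity on a finite set X, then its core is nonempty. -/
open Finset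

variable {X : Type*} [Fintype X] [DecidableEq X]

/-- A convex capacity has nonempty core. -/
theorem stmt2 (ν : Finset X → ℝ) (hν : IsConvexCap ν) : (core ν).Nonempty := by
  obtain ⟨⟨h0, h1, hmono⟩, hconv⟩ := hν
  set n := Fintype.card X with hn
  set e : Fin n ≃ X := (Fintype.equivFin X).symm with he
  set S : ℕ → Finset X := fun i => univ.filter (fun a => ((e.symm a : Fin n) : ℕ) < i)
    with hS
  have hSmono : ∀ {i j : ℕ}, i ≤ j → S i ⊆ S j := by
    intro i j hij a ha
    simp only [hS, mem_filter, mem_univ, true_and] at ha ⊢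
    omega
  have hS0 : S 0 = ∅ := by
    ext a; simp [hS]
  have hStop : S n = univ := by
    ext a; simp only [hS, mem_filter, mem_univ, true_and, iff_true]
    exact (e.symm a).isLt
  have hmem : ∀ (i : Fin n), e i ∉ S (i : ℕ) := by
    intro i
    simp [hS]
  have hins : ∀ (i : Fin n), S ((i : ℕ) + 1) = insert (e i) (S (i : ℕ)) := by
    intro i
    ext a
    simp only [hS, mem_filter, mem_univ, true_and, mem_insert]
    constructor
    · intro h
      rcases Nat.lt_succ_iff_lt_or_eq.mp h with h | h
      · exact Or.inr (by simpa [hS] using h)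
      · left
        have : e.symm a = i := Fin.ext h
        rw [← this, Equiv.apply_symm_apply]
    · rintro (rfl | h)
      · simp
      · omega
  set p : X → ℝ := fun a => ν (S ((e.symm a : ℕ) + 1)) - ν (S (e.symm a : ℕ)) with hp
  have hpe : ∀ i : Fin n, p (e i) = ν (S ((i : ℕ) + 1)) - ν (S (i : ℕ)) := by
    intro i
    show ν (S ((e.symm (e i) : ℕ) + 1)) - ν (S (e.symm (e i) : ℕ)) = _
    rw [Equiv.symm_apply_apply]
  have hpnn : ∀ a, 0 ≤ p a := by
    intro a
    simp only [hp, sub_nonneg]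
    exact hmono (hSmono (Nat.le_succ _))
  have hsum : ∑ a, p a = 1 := by
    rw [← Equiv.sum_comp e]
    calc ∑ i : Fin n, p (e i)
        = ∑ i : Fin n, (ν (S ((i : ℕ) + 1)) - ν (S (i : ℕ))) :=
          Finset.sum_congr rfl (fun i _ => hpe i)
      _ = ∑ i ∈ range n, (ν (S (i + 1)) - ν (S i)) :=
          Fin.sum_univ_eq_sum_range (fun k => ν (S (k + 1)) - ν (S k)) n
      _ = ν (S n) - ν (S 0) := Finset.sum_range_sub (fun k => ν (S k)) n
      _ = 1 := by rw [hStop, hS0, h0, h1, sub_zero]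
  -- key induction
  have key : ∀ (i : ℕ) (K : Finset X), ν (K ∩ S i) ≤ ∑ a ∈ K ∩ S i, p a := by
    intro i
    induction i with
    | zero =>
      intro K
      simp [hS0, h0]
    | succ i ih =>
      intro K
      by_cases hi : i < n
      · set x := e ⟨i, hi⟩ with hx
        have hins' : S (i + 1) = insert x (S i) := hins ⟨i, hi⟩
        have hxS : x ∉ S i := hmem ⟨i, hi⟩
        by_cases hxK : x ∈ K
        · have hKS : K ∩ S (i + 1) = insert x (K ∩ S i) := by
            rw [hins', Finset.inter_insert_of_mem hxK]
          have hxKS : x ∉ K ∩ S i := fun h => hxS (mem_of_mem_inter_right h)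
          have hsum' : ∑ a ∈ K ∩ S (i + 1), p a = p x + ∑ a ∈ K ∩ S i, p a := by
            rw [hKS, Finset.sum_insert hxKS]
          have hcv := hconv (insert x (K ∩ S i)) (S i)
          have hU : insert x (K ∩ S i) ∪ S i = S (i + 1) := by
            rw [hins']
            ext a
            simp only [mem_union, mem_insert, mem_inter]
            tauto
          have hI : insert x (K ∩ S i) ∩ S i = K ∩ S i := by
            ext a
            simp only [mem_inter, mem_insert]
            constructor
            · rintro ⟨rfl | ⟨h1, h2⟩, h3⟩
              · exact absurd h3 hxS
              · exact ⟨h1, h3⟩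
            · tauto
          rw [hU, hI] at hcv
          have hpx : p x = ν (S (i + 1)) - ν (S i) := hpe ⟨i, hi⟩
          rw [hKS, hsum', hKS] at *
          calc ν (insert x (K ∩ S i)) ≤ ν (S (i+1)) + ν (K ∩ S i) - ν (S i) := by linarith
            _ ≤ p x + ∑ a ∈ K ∩ S i, p a := by
                have := ih K; rw [hpx]; linarith
        · have hKS : K ∩ S (i + 1) = K ∩ S i := by
            rw [hins', Finset.inter_insert_of_notMem hxK]
          rw [hKS]; exact ih K
      · have hSeq : S (i + 1) = S i := by
          ext a
          simp only [hS, mem_filter, mem_univ, true_and]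
          have := (e.symm a).isLt
          omega
        rw [hSeq]; exact ih K
  refine ⟨p, ⟨hpnn, hsum⟩, ?_⟩
  intro K
  have := key n K
  rw [hStop, Finset.inter_univ] at this
  exact this
end

section
/- If ν is a convex capacity on a finite set X, then for every K ⊆ X, ν(K) = min{p(K) : p ∈ core(ν)}; that is, ν is the lower envelope of its core. -/
open Finset

variable {X : Type*} [Fintype X] [DecidableEq X]

section aux

variable (ν : Finset X → ℝ) (l : List X)

def chainS (m : ℕ) : Finset X := (l.take m).toFinset

def marg (x : X) : ℝ := ν (chainS l (l.idxOf x + 1)) - ν (chainS l (l.idxOf x))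

lemma chainS_subset {m n : ℕ} (h : m ≤ n) : chainS l m ⊆ chainS l n := by
  intro x hx
  simp only [chainS, List.mem_toFinset] at *
  exact (List.take_subset m (l.take n)) (by rwa [List.take_take, min_eq_left h])

lemma take_succ_eq (m : ℕ) (hm' : m < l.length) :
    l.take (m+1) = l.take m ++ [l[m]] := by
  rw [List.take_succ]
  simp [List.getElem?_eq_getElem hm']

lemma getElem_not_mem_take (hn : l.Nodup) (m : ℕ) (hm' : m < l.length) :
    l[m] ∉ chainS l m := by
  rw [chainS]
  have h2 : (l.take (m+1)).Nodup := hn.sublist (List.take_sublist _ _)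
  rw [take_succ_eq l m hm'] at h2
  rw [List.nodup_append] at h2
  intro hmem
  exact h2.2.2 _ (List.mem_toFinset.mp hmem) _ (List.mem_singleton_self _) rfl

lemma chainS_succ (m : ℕ) (hm' : m < l.length) :
    chainS l (m+1) = insert (l[m]) (chainS l m) := by
  rw [chainS, take_succ_eq l m hm', List.toFinset_append, Finset.union_comm]
  simp only [List.toFinset_cons, List.toFinset_nil, insert_empty_eq]
  rfl

lemma telescope (hempty : ν ∅ = 0) (hn : l.Nodup) (m : ℕ) (hm : m ≤ l.length) :
    mass (marg ν l) (chainS l m) = ν (chainS l m) := by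
  induction m with
  | zero => simp [chainS, mass, hempty]
  | succ m ih =>
    have hm' : m < l.length := hm
    have hidx : l.idxOf (l[m]) = m := hn.idxOf_getElem m hm'
    rw [chainS_succ l m hm']
    simp only [mass, Finset.sum_insert (getElem_not_mem_take l hn m hm')]
    simp only [mass] at ih
    rw [ih (by omega)]
    simp only [marg, hidx, ← chainS_succ l m hm']
    ring

lemma core_bound (hempty : ν ∅ = 0)
    (hconv : ∀ A B : Finset X, ν A + ν B ≤ ν (A ∪ B) + ν (A ∩ B))
    (hn : l.Nodup) (A : Finset X) (m : ℕ) :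
    ν (A ∩ chainS l m) ≤ mass (marg ν l) (A ∩ chainS l m) := by
  induction m with
  | zero => simp [chainS, mass, hempty]
  | succ m ih =>
    by_cases hm' : m < l.length
    · rw [chainS_succ l m hm']
      by_cases hA : l[m] ∈ A
      · have hxS : l[m] ∉ chainS l m := getElem_not_mem_take l hn m hm'
        have heq : A ∩ insert l[m] (chainS l m) = insert l[m] (A ∩ chainS l m) := by
          ext y; simp only [Finset.mem_insert, Finset.mem_inter]
          constructor
          · rintro ⟨hy, hy2 | hy2⟩
            · exact Or.inl hy2
            · exact Or.inr ⟨hy, hy2⟩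
          · rintro (rfl | ⟨hy, hy2⟩)
            · exact ⟨hA, Or.inl rfl⟩
            · exact ⟨hy, Or.inr hy2⟩
        rw [heq]
        have hxAS : l[m] ∉ A ∩ chainS l m := fun h => hxS (Finset.mem_inter.mp h).2
        have hmass : mass (marg ν l) (insert l[m] (A ∩ chainS l m))
            = marg ν l (l[m]) + mass (marg ν l) (A ∩ chainS l m) := by
          simp [mass, Finset.sum_insert hxAS]
        rw [hmass]
        have hcv := hconv (insert l[m] (A ∩ chainS l m)) (chainS l m)
        have hu : insert l[m] (A ∩ chainS l m) ∪ chainS l m = chainS l (m+1) := by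
          rw [chainS_succ l m hm', Finset.insert_union]
          congr 1
          exact Finset.union_eq_right.mpr (Finset.inter_subset_right)
        have hi : insert l[m] (A ∩ chainS l m) ∩ chainS l m = A ∩ chainS l m := by
          rw [Finset.insert_inter_of_notMem hxS,
            Finset.inter_assoc, Finset.inter_self]
        rw [hu, hi] at hcv
        have hidx : l.idxOf (l[m]) = m := hn.idxOf_getElem m hm'
        have hmarg : marg ν l (l[m]) = ν (chainS l (m+1)) - ν (chainS l m) := by
          simp [marg, hidx]
        rw [hmarg]
        linarith
      · have heq : A ∩ insert l[m] (chainS l m) = A ∩ chainS l m := by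
          ext y; simp only [Finset.mem_insert, Finset.mem_inter]
          constructor
          · rintro ⟨hy, rfl | hy2⟩
            · exact absurd hy hA
            · exact ⟨hy, hy2⟩
          · rintro ⟨hy, hy2⟩; exact ⟨hy, Or.inr hy2⟩
        rw [heq]; exact ih
    · have : l.take (m+1) = l.take m := by
        rw [List.take_of_length_le (by omega), List.take_of_length_le (by omega)]
      rw [show chainS l (m+1) = chainS l m by rw [chainS, chainS, this]]
      exact ih

end aux

/-- A convex capacity is the lower envelope of its core: the infimum is attained. -/
theorem stmt3 (ν : Finset X → ℝ) (hν : IsConvexCap ν) (K : Finset X) :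
    IsLeast {r : ℝ | ∃ p ∈ core ν, r = mass p K} (ν K) := by
  obtain ⟨⟨hempty, hfull, hmono⟩, hconv⟩ := hν
  set l : List X := K.toList ++ (Kᶜ : Finset X).toList with hl
  have hn : l.Nodup := by
    refine List.Nodup.append K.nodup_toList (Kᶜ).nodup_toList ?_
    intro a ha hb
    rw [Finset.mem_toList] at ha
    rw [Finset.mem_toList, Finset.mem_compl] at hb
    exact hb ha
  have hlen : K.card ≤ l.length := by
    simp only [hl, List.length_append, Finset.length_toList]
    omega
  have htakeK : chainS l K.card = K := by
    rw [chainS, hl, show K.card = K.toList.length from (Finset.length_toList K).symm,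
      List.take_left]
    exact Finset.toList_toFinset K
  have hluniv : chainS l l.length = Finset.univ := by
    rw [chainS, List.take_length]
    ext x
    simp [hl]
  set p := marg ν l with hp
  have hcoreb : ∀ A : Finset X, ν A ≤ mass p A := by
    intro A
    have := core_bound ν l hempty hconv hn A l.length
    rwa [hluniv, Finset.inter_univ] at this
  have hmassK : mass p K = ν K := by
    have := telescope ν l hempty hn K.card hlen
    rwa [htakeK] at this
  have hsum : ∑ a, p a = 1 := by
    have := telescope ν l hempty hn l.length le_rfl
    rw [hluniv, hfull] at this
    simpa [mass] using this
  have hnn : ∀ a, 0 ≤ p a := by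
    intro a
    have := hmono (chainS_subset l (Nat.le_succ (l.idxOf a)))
    simp only [hp, marg]
    linarith
  constructor
  · exact ⟨p, ⟨⟨hnn, hsum⟩, hcoreb⟩, hmassK.symm⟩
  · rintro r ⟨q, ⟨hq1, hq2⟩, rfl⟩
    exact hq2 K
end

section
/- Let 𝒟 be a finite set, X a finite set, and for each d ∈ 𝒟 let ν_d be a convex capacity on a subset C_d ⊆ X (extended to X by ν_d(K) = ν_d(K ∩ C_d)) with ℛ_d = core(ν_d). Let λ be a probability measure on X and Q a probability measure on 𝒟. Then there exist ρ_d ∈ ℛ_d for each d with λ(a) = Σ_d Q(d)ρ_d(a) for all a ∈ X, if and only if λ(K) ≥ Σ_d Q(d)ν_d(K ∩ C_d) for all K ⊆ X. -/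
open Finset

variable {X : Type*} [Fintype X] [DecidableEq X]

set_option linter.unusedSectionVars false
set_option linter.unusedVariables false

namespace Stmt4Aux

/-- prefix set: first `i` elements under enumeration `g`. -/
def pref (g : Fin (Fintype.card X) ≃ X) (i : ℕ) : Finset X :=
  Finset.univ.filter (fun a => ((g.symm a : ℕ) < i))

/-- marginal vector of `ν` w.r.t. enumeration `g`. -/
def marg (g : Fin (Fintype.card X) ≃ X) (ν : Finset X → ℝ) (a : X) : ℝ :=
  ν (pref g ((g.symm a : ℕ) + 1)) - ν (pref g (g.symm a))

variable (g : Fin (Fintype.card X) ≃ X)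

lemma pref_zero : pref g 0 = ∅ := by
  ext a; simp [pref]

lemma pref_mono {i j : ℕ} (h : i ≤ j) : pref g i ⊆ pref g j := by
  intro a ha; simp [pref] at ha ⊢; omega

lemma pref_univ {i : ℕ} (h : Fintype.card X ≤ i) : pref g i = Finset.univ := by
  ext a; simp [pref]; exact lt_of_lt_of_le (g.symm a).2 h

lemma mem_pref {a : X} {i : ℕ} : a ∈ pref g i ↔ ((g.symm a : ℕ) < i) := by
  simp [pref]

lemma not_mem_pref_self (i : Fin (Fintype.card X)) : g i ∉ pref g (i : ℕ) := by
  simp [mem_pref]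

lemma pref_succ (i : Fin (Fintype.card X)) :
    pref g ((i : ℕ) + 1) = insert (g i) (pref g (i : ℕ)) := by
  ext a
  simp only [mem_pref, Finset.mem_insert]
  constructor
  · intro h
    rcases Nat.lt_succ_iff_lt_or_eq.1 h with h | h
    · exact Or.inr h
    · left
      have : g.symm a = i := Fin.ext h
      rw [← this, g.apply_symm_apply]
  · rintro (rfl | h)
    · simp
    · omega

lemma marg_apply (i : Fin (Fintype.card X)) (ν : Finset X → ℝ) :
    marg g ν (g i) = ν (pref g ((i : ℕ) + 1)) - ν (pref g (i : ℕ)) := by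
  simp [marg]

lemma mass_marg_pref (ν : Finset X → ℝ) (i : ℕ) :
    mass (marg g ν) (pref g i) = ν (pref g i) - ν ∅ := by
  induction i with
  | zero => simp [pref_zero, mass]
  | succ i ih =>
    rcases lt_or_ge i (Fintype.card X) with h | h
    · have hi : pref g (i + 1) = insert (g ⟨i, h⟩) (pref g i) := pref_succ g ⟨i, h⟩
      have hstep : mass (marg g ν) (pref g (i + 1)) =
          marg g ν (g ⟨i, h⟩) + mass (marg g ν) (pref g i) := by
        rw [hi, mass, Finset.sum_insert (not_mem_pref_self g ⟨i, h⟩)]; rfl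
      rw [hstep, ih, marg_apply g ⟨i, h⟩]
      ring
    · rw [pref_univ g h, pref_univ g (le_trans h (Nat.le_succ i))] at *
      exact ih

variable (g : Fin (Fintype.card X) ≃ X)

lemma dominate_pref {ν : Finset X → ℝ} (hν : IsConvexCap ν) (K : Finset X) :
    ∀ i : ℕ, ν (K ∩ pref g i) ≤ mass (marg g ν) (K ∩ pref g i) := by
  obtain ⟨⟨h0, h1, hmono⟩, hconv⟩ := hν
  intro i
  induction i with
  | zero => simp [pref_zero, mass, h0]
  | succ i ih =>
    rcases lt_or_ge i (Fintype.card X) with h | h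
    · set b := g ⟨i, h⟩ with hb
      have hi : pref g (i + 1) = insert b (pref g i) := pref_succ g ⟨i, h⟩
      by_cases hbK : b ∈ K
      · have hbp : b ∉ K ∩ pref g i := by
          simp [not_mem_pref_self g ⟨i, h⟩, hb]
        have hins : K ∩ pref g (i + 1) = insert b (K ∩ pref g i) := by
          rw [hi]; ext x
          simp only [Finset.mem_inter, Finset.mem_insert]
          constructor
          · rintro ⟨hxK, rfl | hx⟩
            · exact Or.inl rfl
            · exact Or.inr ⟨hxK, hx⟩
          · rintro (rfl | ⟨hxK, hx⟩)
            · exact ⟨hbK, Or.inl rfl⟩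
            · exact ⟨hxK, Or.inr hx⟩
        have hmass : mass (marg g ν) (K ∩ pref g (i + 1)) =
            marg g ν b + mass (marg g ν) (K ∩ pref g i) := by
          rw [hins, mass, Finset.sum_insert hbp]; rfl
        have hsup := hconv (K ∩ pref g (i + 1)) (pref g i)
        have hu : K ∩ pref g (i + 1) ∪ pref g i = pref g (i + 1) := by
          rw [hi]; ext x
          simp only [Finset.mem_union, Finset.mem_inter, Finset.mem_insert]
          constructor
          · rintro (⟨hxK, hx⟩ | hx) <;> tauto
          · rintro (rfl | hx)
            · exact Or.inl ⟨hbK, Or.inl rfl⟩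
            · exact Or.inr hx
        have hint : K ∩ pref g (i + 1) ∩ pref g i = K ∩ pref g i := by
          ext x
          simp only [Finset.mem_inter, mem_pref]
          constructor
          · rintro ⟨⟨hxK, _⟩, hx⟩; exact ⟨hxK, hx⟩
          · rintro ⟨hxK, hx⟩; exact ⟨⟨hxK, by omega⟩, hx⟩
        rw [hu, hint] at hsup
        have hmarg : marg g ν b = ν (pref g (i + 1)) - ν (pref g i) := marg_apply g ⟨i, h⟩ ν
        rw [hmass, hmarg]
        linarith
      · have heq : K ∩ pref g (i + 1) = K ∩ pref g i := by
          rw [hi]; ext x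
          simp only [Finset.mem_inter, Finset.mem_insert]
          constructor
          · rintro ⟨hxK, rfl | hx⟩
            · exact absurd hxK hbK
            · exact ⟨hxK, hx⟩
          · rintro ⟨hxK, hx⟩; exact ⟨hxK, Or.inr hx⟩
        rw [heq]; exact ih
    · rw [pref_univ g (le_trans h (Nat.le_succ i))]
      rw [pref_univ g h] at ih
      exact ih

lemma marg_mem_core {ν : Finset X → ℝ} (hν : IsConvexCap ν) : marg g ν ∈ core ν := by
  obtain ⟨⟨h0, h1, hmono⟩, hconv⟩ := hν
  have hsum : ∑ a, marg g ν a = 1 := by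
    have := mass_marg_pref g ν (Fintype.card X)
    rw [pref_univ g le_rfl] at this
    simpa [mass, h0, h1] using this
  refine ⟨⟨?_, hsum⟩, ?_⟩
  · intro a
    have : pref g ((g.symm a : ℕ)) ⊆ pref g ((g.symm a : ℕ) + 1) :=
      pref_mono g (Nat.le_succ _)
    have := hmono this
    simp only [marg]
    linarith
  · intro K
    have := dominate_pref g ⟨⟨h0, h1, hmono⟩, hconv⟩ K (Fintype.card X)
    rwa [pref_univ g le_rfl, Finset.inter_univ] at this
lemma greedy {ν : Finset X → ℝ} (hν : IsConvexCap ν) (hn : 0 < Fintype.card X)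
    (c : X → ℝ)
    (hmono : ∀ i j : Fin (Fintype.card X), i ≤ j → c (g i) ≤ c (g j))
    {p : X → ℝ} (hp : p ∈ core ν) :
    ∑ a, c a * p a ≤ ∑ a, c a * marg g ν a := by
  obtain ⟨⟨hpnn, hp1⟩, hpdom⟩ := hp
  obtain ⟨⟨h0, h1, hm⟩, hconv⟩ := hν
  -- the deficit function
  set D : ℕ → ℝ := fun i => mass p (pref g i) - ν (pref g i) with hD
  have hD0 : D 0 = 0 := by simp [hD, pref_zero, mass, h0]
  have hDn : D (Fintype.card X) = 0 := by
    simp only [hD, pref_univ g le_rfl, h1]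
    simp [mass, hp1]
  have hDnn : ∀ i, 0 ≤ D i := fun i => by
    have := hpdom (pref g i); simp only [hD]; linarith
  -- the enumeration as a function on ℕ
  have hn1 : Fintype.card X - 1 < Fintype.card X := by omega
  set e : ℕ → X := fun i => g ⟨min i (Fintype.card X - 1), by omega⟩ with he
  have he_lt : ∀ i (hi : i < Fintype.card X), e i = g ⟨i, hi⟩ := by
    intro i hi
    simp only [he]
    congr 1
    exact Fin.ext (by simp only []; omega)
  have hemono : ∀ i j : ℕ, i ≤ j → c (e i) ≤ c (e j) := by
    intro i j hij
    exact hmono _ _ (by simp only [Fin.le_def]; omega)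
  have hstep : ∀ i (hi : i < Fintype.card X),
      D (i + 1) - D i = p (e i) - marg g ν (e i) := by
    intro i hi
    rw [he_lt i hi]
    have hins : pref g (i + 1) = insert (g ⟨i, hi⟩) (pref g i) := pref_succ g ⟨i, hi⟩
    have hmp : mass p (pref g (i + 1)) = p (g ⟨i, hi⟩) + mass p (pref g i) := by
      rw [hins, mass, Finset.sum_insert (not_mem_pref_self g ⟨i, hi⟩)]; rfl
    have hmarg := marg_apply g ⟨i, hi⟩ ν
    simp only [hD]
    rw [hmp, hmarg]
    ring
  -- the key inductive claim (Abel summation)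
  have key : ∀ k, k < Fintype.card X →
      ∑ i ∈ Finset.range (k + 1), c (e i) * (p (e i) - marg g ν (e i))
        ≤ c (e k) * D (k + 1) := by
    intro k
    induction k with
    | zero =>
      intro h
      rw [Finset.sum_range_one]
      have h2 := hstep 0 h
      rw [hD0, sub_zero] at h2
      rw [← h2]
    | succ k ih =>
      intro h
      have hk : k < Fintype.card X := by omega
      have h1' := ih hk
      rw [Finset.sum_range_succ]
      have h2 := hstep (k + 1) h
      have h3 : c (e k) * D (k + 1) ≤ c (e (k + 1)) * D (k + 1) :=
        mul_le_mul_of_nonneg_right (hemono k (k + 1) (Nat.le_succ k)) (hDnn (k + 1))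
      have h4 : c (e (k + 1)) * (p (e (k + 1)) - marg g ν (e (k + 1))) =
          c (e (k + 1)) * D (k + 1 + 1) - c (e (k + 1)) * D (k + 1) := by
        rw [← h2]; ring
      linarith
  -- reindex the sum over X
  have hreindex : ∀ f : X → ℝ, ∑ a, f a = ∑ i ∈ Finset.range (Fintype.card X), f (e i) := by
    intro f
    rw [← Equiv.sum_comp g f]
    rw [← Fin.sum_univ_eq_sum_range (fun i => f (e i)) (Fintype.card X)]
    refine Finset.sum_congr rfl fun i _ => ?_
    rw [he_lt i i.2]
  have hfinal := key (Fintype.card X - 1) hn1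
  rw [Nat.sub_add_cancel hn, hDn, mul_zero] at hfinal
  have hle : ∑ a, (c a * p a - c a * marg g ν a) ≤ 0 := by
    rw [hreindex (fun a => c a * p a - c a * marg g ν a)]
    calc ∑ i ∈ Finset.range (Fintype.card X), (c (e i) * p (e i) - c (e i) * marg g ν (e i))
        = ∑ i ∈ Finset.range (Fintype.card X), c (e i) * (p (e i) - marg g ν (e i)) := by
          refine Finset.sum_congr rfl fun i _ => by ring
      _ ≤ 0 := hfinal
  rw [Finset.sum_sub_distrib] at hle
  linarith

lemma exists_sorted (c : X → ℝ) : ∃ g : Fin (Fintype.card X) ≃ X,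
    ∀ i j, i ≤ j → c (g i) ≤ c (g j) := by
  let e := (Fintype.equivFin X).symm
  let σ := Tuple.sort (c ∘ e)
  exact ⟨σ.trans e, fun i j hij => Tuple.monotone_sort (c ∘ e) hij⟩

lemma core_combo {ν : Finset X → ℝ} {ι : Type*} (t : Finset ι) (w : ι → ℝ) (z : ι → X → ℝ)
    (hw : ∀ i ∈ t, 0 ≤ w i) (hw1 : ∑ i ∈ t, w i = 1) (hz : ∀ i ∈ t, z i ∈ core ν) :
    (fun a => ∑ i ∈ t, w i * z i a) ∈ core ν := by
  refine ⟨⟨fun a => Finset.sum_nonneg fun i hi => mul_nonneg (hw i hi) ((hz i hi).1.1 a),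
    ?_⟩, ?_⟩
  · rw [Finset.sum_comm]
    calc ∑ i ∈ t, ∑ a, w i * z i a
        = ∑ i ∈ t, w i := by
          refine Finset.sum_congr rfl fun i hi => ?_
          rw [← Finset.mul_sum, (hz i hi).1.2, mul_one]
      _ = 1 := hw1
  · intro K
    have hmass : mass (fun a => ∑ i ∈ t, w i * z i a) K = ∑ i ∈ t, w i * mass (z i) K := by
      simp only [mass, Finset.mul_sum]
      rw [Finset.sum_comm]
    rw [hmass]
    have h1 : ν K = ∑ i ∈ t, w i * ν K := by rw [← Finset.sum_mul, hw1, one_mul]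
    rw [h1]
    exact Finset.sum_le_sum fun i hi => mul_le_mul_of_nonneg_left ((hz i hi).2 K) (hw i hi)

lemma mix_convexCap {D : Type*} [Fintype D] (ν : D → Finset X → ℝ) (Q : D → ℝ)
    (hQ : IsProb Q) (hcap : ∀ d, IsConvexCap (ν d)) :
    IsConvexCap (fun K => ∑ d, Q d * ν d K) := by
  refine ⟨⟨?_, ?_, ?_⟩, ?_⟩
  · exact Finset.sum_eq_zero fun d _ => by rw [(hcap d).1.1, mul_zero]
  · calc ∑ d, Q d * ν d Finset.univ = ∑ d, Q d := by
          refine Finset.sum_congr rfl fun d _ => by rw [(hcap d).1.2.1, mul_one]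
      _ = 1 := hQ.2
  · intro A B hAB
    exact Finset.sum_le_sum fun d _ =>
      mul_le_mul_of_nonneg_left ((hcap d).1.2.2 hAB) (hQ.1 d)
  · intro A B
    calc (∑ d, Q d * ν d A) + ∑ d, Q d * ν d B
        = ∑ d, (Q d * ν d A + Q d * ν d B) := Finset.sum_add_distrib.symm
      _ ≤ ∑ d, (Q d * ν d (A ∪ B) + Q d * ν d (A ∩ B)) := by
          refine Finset.sum_le_sum fun d _ => ?_
          have h := (hcap d).2 A B
          have hq := hQ.1 d
          nlinarith
      _ = (∑ d, Q d * ν d (A ∪ B)) + ∑ d, Q d * ν d (A ∩ B) := Finset.sum_add_distrib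

lemma marg_mix {D : Type*} [Fintype D] (ν : D → Finset X → ℝ) (Q : D → ℝ) (a : X) :
    marg g (fun K => ∑ d, Q d * ν d K) a = ∑ d, Q d * marg g (ν d) a := by
  simp only [marg]
  rw [← Finset.sum_sub_distrib]
  exact Finset.sum_congr rfl fun d _ => by ring

lemma mem_hull {ν : Finset X → ℝ} (hν : IsConvexCap ν) (hn : 0 < Fintype.card X)
    {lam : X → ℝ} (hlam : lam ∈ core ν) :
    lam ∈ convexHull ℝ (Set.range fun gg : Fin (Fintype.card X) ≃ X => marg gg ν) := by
  by_contra hnot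
  have hfin : (Set.range fun gg : Fin (Fintype.card X) ≃ X => marg gg ν).Finite :=
    Set.finite_range _
  obtain ⟨f, u, hfu, hul⟩ := geometric_hahn_banach_closed_point
    (convex_convexHull ℝ _) ((hfin.isCompact_convexHull ℝ).isClosed) hnot
  set c : X → ℝ := fun a => f ((Pi.single a 1 : X → ℝ)) with hc
  have hf : ∀ x : X → ℝ, f x = ∑ a, c a * x a := by
    intro x
    have hx : x = ∑ a, x a • (Pi.single a 1 : X → ℝ) := by
      funext b
      rw [Finset.sum_apply]
      simp [Pi.single_apply]
    conv_lhs => rw [hx]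
    rw [map_sum]
    refine Finset.sum_congr rfl fun a _ => ?_
    rw [map_smul]
    simp [hc, mul_comm]
  obtain ⟨gg, hgg⟩ := exists_sorted c
  have h1 : f lam ≤ f (marg gg ν) := by
    rw [hf, hf]
    exact greedy gg hν hn c hgg hlam
  have h2 : f (marg gg ν) < u := hfu _ (subset_convexHull ℝ _ ⟨gg, rfl⟩)
  linarith

end Stmt4Aux


open Stmt4Aux

/-- Main identification theorem: Q rationalizes λ given cores of convex capacities
iff the dominance inequalities hold. -/
theorem stmt4 {D : Type*} [Fintype D] (C : D → Finset X) (ν : D → Finset X → ℝ)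
    (hcap : ∀ d, IsConvexCap (ν d)) (hone : ∀ d, ν d (C d) = 1)
    (hext : ∀ d K, ν d K = ν d (K ∩ C d))
    (lam : X → ℝ) (hlam : IsProb lam) (Q : D → ℝ) (hQ : IsProb Q) :
    (∃ ρ : D → X → ℝ, (∀ d, ρ d ∈ core (ν d)) ∧ ∀ a, lam a = ∑ d, Q d * ρ d a) ↔
      ∀ K : Finset X, ∑ d, Q d * ν d (K ∩ C d) ≤ mass lam K := by
  constructor
  · rintro ⟨ρ, hρ, hrep⟩ K
    have hmK : mass lam K = ∑ d, Q d * mass (ρ d) K := by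
      simp only [mass, hrep]
      rw [Finset.sum_comm]
      exact Finset.sum_congr rfl fun d _ => (Finset.mul_sum _ _ _).symm
    rw [hmK]
    refine Finset.sum_le_sum fun d _ => ?_
    rw [← hext d K]
    exact mul_le_mul_of_nonneg_left ((hρ d).2 K) (hQ.1 d)
  · intro hdom
    have hn : 0 < Fintype.card X := by
      rcases Nat.eq_zero_or_pos (Fintype.card X) with h | h
      · exfalso
        have hemp : IsEmpty X := Fintype.card_eq_zero_iff.mp h
        have h2 := hlam.2
        rw [Finset.univ_eq_empty, Finset.sum_empty] at h2
        norm_num at h2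
      · exact h
    set μ : Finset X → ℝ := fun K => ∑ d, Q d * ν d K with hμ
    have hμcap : IsConvexCap μ := mix_convexCap ν Q hQ hcap
    have hlamcore : lam ∈ core μ := by
      refine ⟨hlam, fun K => ?_⟩
      calc μ K = ∑ d, Q d * ν d (K ∩ C d) :=
            Finset.sum_congr rfl fun d _ => by rw [← hext d K]
        _ ≤ mass lam K := hdom K
    have hhull := mem_hull hμcap hn hlamcore
    rw [_root_.convexHull_eq] at hhull
    obtain ⟨ι, t, w, z, hw0, hw1, hzS, hcm⟩ := hhull
    rw [Finset.centerMass_eq_of_sum_1 t z hw1] at hcm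
    have hchoice : ∀ i ∈ t, ∃ gg : Fin (Fintype.card X) ≃ X, marg gg μ = z i :=
      fun i hi => hzS i hi
    choose G hG using hchoice
    refine ⟨fun d a => ∑ i ∈ t.attach, w i * marg (G i i.2) (ν d) a, fun d => ?_, fun a => ?_⟩
    · exact core_combo t.attach (fun i => w ↑i) (fun i => marg (G i i.2) (ν d))
        (fun i _ => hw0 i i.2)
        (by rw [Finset.sum_attach t w]; exact hw1)
        (fun i _ => marg_mem_core (G i i.2) (hcap d))
    · have h1 : lam a = ∑ i ∈ t.attach, w i * marg (G i i.2) μ a := by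
        have h2 := congrFun hcm a
        rw [Finset.sum_apply] at h2
        rw [← h2, ← Finset.sum_attach t (fun i => (w i • z i) a)]
        refine Finset.sum_congr rfl fun i _ => ?_
        rw [← hG i i.2]
        simp
      rw [h1]
      calc ∑ i ∈ t.attach, w i * marg (G i i.2) μ a
          = ∑ i ∈ t.attach, ∑ d, w i * (Q d * marg (G i i.2) (ν d) a) := by
            refine Finset.sum_congr rfl fun i _ => ?_
            rw [hμ, marg_mix, Finset.mul_sum]
        _ = ∑ d, Q d * ∑ i ∈ t.attach, w i * marg (G i i.2) (ν d) a := by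
            rw [Finset.sum_comm]
            refine Finset.sum_congr rfl fun d _ => ?_
            rw [Finset.mul_sum]
            exact Finset.sum_congr rfl fun i _ => by ring
end

section
/- Let C be a nonempty subset of a finite set X, ρ̂ a probability measure on C, and ε ∈ [0,1]. Define ν(K) = (1-ε)ρ̂(K ∩ C) + ε·1_{C ⊆ K}. Then ν is a convex capacity on X and its core equals the ε-contamination set {(1-ε)ρ̂ + ερ̃ : ρ̃ ∈ Δ(C)}. -/
open Finset

variable {X : Type*} [Fintype X] [DecidableEq X]

/-- The ε-contamination capacity is convex and its core is the contamination set. -/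
theorem stmt6 (C : Finset X) (hC : C.Nonempty) (ρhat : X → ℝ)
    (hρhat : IsProb ρhat ∧ ∀ a ∉ C, ρhat a = 0)
    (ε : ℝ) (hε : ε ∈ Set.Icc (0:ℝ) 1) (ν : Finset X → ℝ)
    (hν : ∀ K : Finset X,
      ν K = (1 - ε) * mass ρhat (K ∩ C) + ε * (if C ⊆ K then 1 else 0)) :
    IsConvexCap ν ∧
      core ν = {p | ∃ ρt : X → ℝ, (IsProb ρt ∧ ∀ a ∉ C, ρt a = 0) ∧
        p = fun a => (1 - ε) * ρhat a + ε * ρt a} := by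
  obtain ⟨⟨hρ0, hρ1⟩, hρC⟩ := hρhat
  obtain ⟨hε0, hε1⟩ := hε
  have h1ε : (0:ℝ) ≤ 1 - ε := by linarith
  have hmassC : mass ρhat C = 1 := by
    rw [← hρ1]
    exact Finset.sum_subset (Finset.subset_univ C) (fun a _ ha => hρC a ha)
  have hmassK : ∀ (q : X → ℝ), (∀ a ∉ C, q a = 0) → ∀ K : Finset X,
      mass q (K ∩ C) = mass q K := by
    intro q hq K
    apply Finset.sum_subset Finset.inter_subset_left
    intro a ha hna
    by_cases hac : a ∈ C
    · exact absurd (Finset.mem_inter.mpr ⟨ha, hac⟩) hna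
    · exact hq a hac
  have hmass_mono : ∀ (q : X → ℝ), (∀ a, 0 ≤ q a) → ∀ {A B : Finset X}, A ⊆ B →
      mass q A ≤ mass q B := by
    intro q hq A B hAB
    exact Finset.sum_le_sum_of_subset_of_nonneg hAB (fun a _ _ => hq a)
  have hcap : IsCapacity ν := by
    refine ⟨?_, ?_, ?_⟩
    · rw [hν ∅]
      have : ¬ C ⊆ ∅ := fun h => hC.ne_empty (Finset.subset_empty.mp h)
      simp [this, mass]
    · rw [hν Finset.univ]
      rw [Finset.univ_inter, hmassC, if_pos (Finset.subset_univ C)]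
      ring
    · intro A B hAB
      rw [hν A, hν B]
      have h1 : mass ρhat (A ∩ C) ≤ mass ρhat (B ∩ C) :=
        hmass_mono ρhat hρ0 (Finset.inter_subset_inter hAB Finset.Subset.rfl)
      have h2 : (if C ⊆ A then (1:ℝ) else 0) ≤ (if C ⊆ B then (1:ℝ) else 0) := by
        by_cases hA : C ⊆ A
        · rw [if_pos hA, if_pos (hA.trans hAB)]
        · rw [if_neg hA]
          split_ifs <;> norm_num
      exact add_le_add (mul_le_mul_of_nonneg_left h1 h1ε) (mul_le_mul_of_nonneg_left h2 hε0)
  have hconv : IsConvexCap ν := by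
    refine ⟨hcap, ?_⟩
    intro A B
    rw [hν A, hν B, hν (A ∪ B), hν (A ∩ B)]
    have e1 : (A ∪ B) ∩ C = (A ∩ C) ∪ (B ∩ C) := by
      ext a; simp only [Finset.mem_inter, Finset.mem_union]; tauto
    have e2 : (A ∩ B) ∩ C = (A ∩ C) ∩ (B ∩ C) := by
      ext a; simp only [Finset.mem_inter]; tauto
    have hm : mass ρhat (A ∩ C) + mass ρhat (B ∩ C)
        = mass ρhat ((A ∪ B) ∩ C) + mass ρhat ((A ∩ B) ∩ C) := by
      rw [e1, e2]
      exact (Finset.sum_union_inter).symm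
    have hi : (if C ⊆ A then (1:ℝ) else 0) + (if C ⊆ B then 1 else 0) ≤
        (if C ⊆ A ∪ B then 1 else 0) + (if C ⊆ A ∩ B then 1 else 0) := by
      by_cases hA : C ⊆ A
      · by_cases hB : C ⊆ B
        · rw [if_pos hA, if_pos hB, if_pos (hA.trans Finset.subset_union_left),
            if_pos (Finset.subset_inter hA hB)]
        · rw [if_pos hA, if_neg hB, if_pos (hA.trans Finset.subset_union_left)]
          split_ifs <;> norm_num
      · rw [if_neg hA]
        have hAB : ¬ C ⊆ A ∩ B := fun h => hA (h.trans Finset.inter_subset_left)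
        rw [if_neg hAB]
        by_cases hB : C ⊆ B
        · rw [if_pos hB, if_pos (hB.trans Finset.subset_union_right)]; norm_num
        · rw [if_neg hB]; split_ifs <;> norm_num
    have hm' : (1 - ε) * (mass ρhat (A ∩ C) + mass ρhat (B ∩ C))
        = (1 - ε) * (mass ρhat ((A ∪ B) ∩ C) + mass ρhat ((A ∩ B) ∩ C)) := by rw [hm]
    have hi' := mul_le_mul_of_nonneg_left hi hε0
    nlinarith [hm', hi']
  refine ⟨hconv, ?_⟩
  ext p
  simp only [core, Set.mem_setOf_eq]
  constructor
  · rintro ⟨⟨hp0, hp1⟩, hpK⟩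
    -- p vanishes off C
    have hνC : ν C = 1 := by
      rw [hν C, Finset.inter_self, hmassC, if_pos Finset.Subset.rfl]; ring
    have hpC : mass p C = 1 := by
      have h1 : (1:ℝ) ≤ mass p C := hνC ▸ hpK C
      have h2 : mass p C ≤ 1 := by
        rw [← hp1]
        exact hmass_mono p hp0 (Finset.subset_univ C)
      linarith
    have hpCc : ∀ a ∉ C, p a = 0 := by
      have hsd : ∑ a ∈ Finset.univ \ C, p a = 0 := by
        have := Finset.sum_sdiff (Finset.subset_univ C) (f := p)
        rw [hp1] at this
        have : ∑ a ∈ Finset.univ \ C, p a = 1 - mass p C := by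
          unfold mass at *; linarith
        rw [this, hpC]; ring
      intro a ha
      have := (Finset.sum_eq_zero_iff_of_nonneg
        (fun a _ => hp0 a)).mp hsd a (by simp [ha])
      exact this
    -- p a ≥ (1-ε) ρhat a
    have hlow : ∀ a, (1 - ε) * ρhat a ≤ p a := by
      intro a
      by_cases hac : a ∈ C
      · have h := hpK {a}
        rw [hν {a}] at h
        have hs : ({a} : Finset X) ∩ C = {a} := by
          rw [Finset.inter_eq_left]; simpa using hac
        rw [hs] at h
        have hmass : mass ρhat {a} = ρhat a := Finset.sum_singleton _ _
        have hmp : mass p {a} = p a := Finset.sum_singleton _ _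
        rw [hmass, hmp] at h
        have : (0:ℝ) ≤ ε * (if C ⊆ {a} then 1 else 0) := by
          apply mul_nonneg hε0; split_ifs <;> norm_num
        linarith
      · rw [hρC a hac]
        simpa using hp0 a
    by_cases hεz : ε = 0
    · -- p = ρhat
      refine ⟨ρhat, ⟨⟨hρ0, hρ1⟩, hρC⟩, ?_⟩
      have heq : ∀ a, p a = ρhat a := by
        have hsum : ∑ a, (p a - ρhat a) = 0 := by
          rw [Finset.sum_sub_distrib, hp1, hρ1]; ring
        intro a
        have := (Finset.sum_eq_zero_iff_of_nonneg
          (fun a _ => by have := hlow a; rw [hεz] at this; simp at this; linarith)).mp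
          hsum a (Finset.mem_univ a)
        linarith
      funext a
      rw [heq a, hεz]; ring
    · have hεpos : 0 < ε := lt_of_le_of_ne hε0 (Ne.symm hεz)
      refine ⟨fun a => (p a - (1 - ε) * ρhat a) / ε, ⟨⟨?_, ?_⟩, ?_⟩, ?_⟩
      · intro a
        exact div_nonneg (by linarith [hlow a]) hε0
      · rw [← Finset.sum_div, Finset.sum_sub_distrib, hp1, ← Finset.mul_sum, hρ1]
        field_simp
        ring
      · intro a ha
        simp [hpCc a ha, hρC a ha]
      · funext a
        field_simp
        ring
  · rintro ⟨ρt, ⟨⟨ht0, ht1⟩, htC⟩, rfl⟩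
    have hmassρtC : mass ρt C = 1 := by
      rw [← ht1]
      exact Finset.sum_subset (Finset.subset_univ C) (fun a _ ha => htC a ha)
    refine ⟨⟨?_, ?_⟩, ?_⟩
    · intro a
      exact add_nonneg (mul_nonneg h1ε (hρ0 a)) (mul_nonneg hε0 (ht0 a))
    · rw [Finset.sum_add_distrib, ← Finset.mul_sum, ← Finset.mul_sum, hρ1, ht1]; ring
    · intro K
      rw [hν K]
      have hsplit : mass (fun a => (1 - ε) * ρhat a + ε * ρt a) K
          = (1 - ε) * mass ρhat K + ε * mass ρt K := by
        unfold mass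
        rw [Finset.sum_add_distrib, ← Finset.mul_sum, ← Finset.mul_sum]
      rw [hsplit, hmassK ρhat hρC K]
      have hind : ε * (if C ⊆ K then (1:ℝ) else 0) ≤ ε * mass ρt K := by
        apply mul_le_mul_of_nonneg_left _ hε0
        split_ifs with hCK
        · rw [← hmassρtC]
          exact hmass_mono ρt ht0 hCK
        · exact Finset.sum_nonneg (fun a _ => ht0 a)
      linarith
end

section
/- Let C be a nonempty subset of a finite set X, P a probability measure on C, and ε > 0. Define ν(K) = max{P(K ∩ C) - ε, 0} if C ⊄ K and ν(K) = 1 if C ⊆ K. Then ν is a convex capacity on X whose core equals the closed total variation neighborhood {p ∈ Δ(C) : sup_{K ⊆ C} |p(K) - P(K)| ≤ ε}. -/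
open Finset

variable {X : Type*} [Fintype X] [DecidableEq X]

set_option linter.unusedSectionVars false

lemma mass_mono (p : X → ℝ) (hp : ∀ a, 0 ≤ p a) {A B : Finset X} (h : A ⊆ B) :
    mass p A ≤ mass p B :=
  Finset.sum_le_sum_of_subset_of_nonneg h (fun i _ _ => hp i)

lemma mass_nonneg (p : X → ℝ) (hp : ∀ a, 0 ≤ p a) (A : Finset X) : 0 ≤ mass p A :=
  Finset.sum_nonneg fun i _ => hp i

lemma mass_supported (p : X → ℝ) (C : Finset X) (hp : ∀ a ∉ C, p a = 0) :
    mass p C = ∑ a, p a :=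
  Finset.sum_subset (Finset.subset_univ C) (fun a _ ha => hp a ha)

lemma key_max {x y u v ε : ℝ} (hxu : x ≤ u) (hyu : y ≤ u) (hsum : x + y = u + v) :
    max (x - ε) 0 + max (y - ε) 0 ≤ max (u - ε) 0 + max (v - ε) 0 := by
  rcases max_cases (x - ε) 0 with ⟨h1, h1'⟩ | ⟨h1, h1'⟩ <;>
  rcases max_cases (y - ε) 0 with ⟨h2, h2'⟩ | ⟨h2, h2'⟩ <;>
  rcases max_cases (u - ε) 0 with ⟨h3, h3'⟩ | ⟨h3, h3'⟩ <;>
  rcases max_cases (v - ε) 0 with ⟨h4, h4'⟩ | ⟨h4, h4'⟩ <;>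
  rw [h1, h2, h3, h4] <;> linarith

lemma mass_union_inter (p : X → ℝ) (A B : Finset X) :
    mass p (A ∪ B) + mass p (A ∩ B) = mass p A + mass p B :=
  Finset.sum_union_inter

lemma mass_sdiff (p : X → ℝ) {K C : Finset X} (h : K ⊆ C) :
    mass p (C \ K) + mass p K = mass p C :=
  Finset.sum_sdiff h

/-- The total-variation-neighborhood capacity is convex and its core is the closed
variation neighborhood of P. -/
theorem stmt7 (C : Finset X) (hC : C.Nonempty) (P : X → ℝ)
    (hP : IsProb P ∧ ∀ a ∉ C, P a = 0) (ε : ℝ) (hε : 0 < ε) (ν : Finset X → ℝ)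
    (hν : ∀ K : Finset X,
      ν K = if C ⊆ K then 1 else max (mass P (K ∩ C) - ε) 0) :
    IsConvexCap ν ∧
      core ν = {p | (IsProb p ∧ ∀ a ∉ C, p a = 0) ∧
        ∀ K : Finset X, K ⊆ C → |mass p K - mass P K| ≤ ε} := by
  obtain ⟨⟨hP0, hP1⟩, hPsupp⟩ := hP
  have hPC : mass P C = 1 := by rw [mass_supported P C hPsupp]; exact hP1
  have hPle : ∀ K ⊆ C, mass P K ≤ 1 := fun K hK => hPC ▸ mass_mono P hP0 hK
  have hadd : ∀ A B : Finset X,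
      mass P (A ∩ C) + mass P (B ∩ C) = mass P ((A ∪ B) ∩ C) + mass P (A ∩ B ∩ C) := by
    intro A B
    have h1 : (A ∩ C) ∪ (B ∩ C) = (A ∪ B) ∩ C := (Finset.union_inter_distrib_right A B C).symm
    have h2 : (A ∩ C) ∩ (B ∩ C) = A ∩ B ∩ C := by
      ext a; simp only [Finset.mem_inter]; tauto
    rw [← h1, ← h2]; exact (mass_union_inter P _ _).symm
  constructor
  · constructor
    · refine ⟨?_, ?_, ?_⟩
      · rw [hν]
        have hne : ¬ C ⊆ ∅ := fun h => hC.ne_empty (Finset.subset_empty.mp h)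
        rw [if_neg hne]
        have h0 : mass P (∅ ∩ C) = 0 := by simp [mass]
        rw [h0]; exact max_eq_right (by linarith)
      · rw [hν]; rw [if_pos (Finset.subset_univ C)]
      · intro A B hAB
        rw [hν A, hν B]
        by_cases hA : C ⊆ A
        · rw [if_pos hA, if_pos (hA.trans hAB)]
        · rw [if_neg hA]
          by_cases hB : C ⊆ B
          · rw [if_pos hB]
            refine max_le (by linarith [hPle (A ∩ C) Finset.inter_subset_right]) zero_le_one
          · rw [if_neg hB]
            refine max_le_max (by
              have := mass_mono P hP0 (Finset.inter_subset_inter hAB (Finset.Subset.refl C))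
              linarith) le_rfl
    · intro A B
      rw [hν A, hν B, hν (A ∪ B), hν (A ∩ B)]
      by_cases hA : C ⊆ A
      · by_cases hB : C ⊆ B
        · rw [if_pos hA, if_pos hB, if_pos (hA.trans Finset.subset_union_left),
            if_pos (Finset.subset_inter hA hB)]
        · have hI : ¬ C ⊆ A ∩ B := fun h => hB (h.trans Finset.inter_subset_right)
          rw [if_pos hA, if_neg hB, if_pos (hA.trans Finset.subset_union_left), if_neg hI]
          have hEq : A ∩ B ∩ C = B ∩ C := by
            ext a; simp only [Finset.mem_inter]
            exact ⟨fun h => ⟨h.1.2, h.2⟩, fun h => ⟨⟨hA h.2, h.1⟩, h.2⟩⟩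
          rw [hEq]
      · by_cases hB : C ⊆ B
        · have hI : ¬ C ⊆ A ∩ B := fun h => hA (h.trans Finset.inter_subset_left)
          rw [if_neg hA, if_pos hB, if_pos (hB.trans Finset.subset_union_right), if_neg hI]
          have hEq : A ∩ B ∩ C = A ∩ C := by
            ext a; simp only [Finset.mem_inter]
            exact ⟨fun h => ⟨h.1.1, h.2⟩, fun h => ⟨⟨h.1, hB h.2⟩, h.2⟩⟩
          rw [hEq]; linarith
        · have hI : ¬ C ⊆ A ∩ B := fun h => hA (h.trans Finset.inter_subset_left)
          rw [if_neg hA, if_neg hB, if_neg hI]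
          have hxu := mass_mono P hP0
            (Finset.inter_subset_inter (Finset.subset_union_left (s₁ := A) (s₂ := B))
              (Finset.Subset.refl C))
          have hyu := mass_mono P hP0
            (Finset.inter_subset_inter (Finset.subset_union_right (s₁ := A) (s₂ := B))
              (Finset.Subset.refl C))
          have hkey := key_max (ε := ε) hxu hyu (hadd A B)
          by_cases hU : C ⊆ A ∪ B
          · rw [if_pos hU]
            have hu1 : mass P ((A ∪ B) ∩ C) ≤ 1 := hPle _ Finset.inter_subset_right
            have : max (mass P ((A ∪ B) ∩ C) - ε) 0 ≤ 1 :=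
              max_le (by linarith) zero_le_one
            linarith
          · rw [if_neg hU]; exact hkey
  · ext p
    simp only [core, Set.mem_setOf_eq]
    constructor
    · rintro ⟨⟨hp0, hp1⟩, hdom⟩
      have hsupp : ∀ a ∉ C, p a = 0 := by
        intro a ha
        have hsub : C ⊆ Finset.univ \ {a} := by
          intro b hb
          simp only [Finset.mem_sdiff, Finset.mem_univ, Finset.mem_singleton, true_and]
          rintro rfl; exact ha hb
        have h1 : ν (Finset.univ \ {a}) = 1 := by rw [hν, if_pos hsub]
        have h2 : mass p (Finset.univ \ {a}) + p a = 1 := by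
          have := mass_sdiff p (Finset.subset_univ {a})
          simp only [mass] at this ⊢; simpa [hp1] using this
        have := hdom (Finset.univ \ {a})
        rw [h1] at this
        exact le_antisymm (by linarith) (hp0 a)
      have hlow : ∀ K ⊆ C, mass P K - ε ≤ mass p K := by
        intro K hK
        have hd := hdom K
        rw [hν K] at hd
        by_cases hCK : C ⊆ K
        · rw [if_pos hCK] at hd
          have := hPle K hK
          linarith
        · rw [if_neg hCK, Finset.inter_eq_left.mpr hK] at hd
          calc mass P K - ε ≤ max (mass P K - ε) 0 := le_max_left _ _
            _ ≤ mass p K := hd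
      refine ⟨⟨⟨hp0, hp1⟩, hsupp⟩, ?_⟩
      intro K hK
      rw [abs_le]
      constructor
      · linarith [hlow K hK]
      · have h1 := hlow (C \ K) Finset.sdiff_subset
        have h2 : mass p (C \ K) + mass p K = mass p C := mass_sdiff p hK
        have h3 : mass P (C \ K) + mass P K = 1 := by rw [mass_sdiff P hK, hPC]
        have h4 : mass p C ≤ 1 := by
          unfold mass
          rw [← hp1]
          exact Finset.sum_le_sum_of_subset_of_nonneg (Finset.subset_univ C) (fun i _ _ => hp0 i)
        linarith
    · rintro ⟨⟨⟨hp0, hp1⟩, hpsupp⟩, htv⟩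
      refine ⟨⟨hp0, hp1⟩, ?_⟩
      intro K
      rw [hν K]
      by_cases hCK : C ⊆ K
      · rw [if_pos hCK]
        have h1 : mass p C = 1 := by rw [mass_supported p C hpsupp]; exact hp1
        have := mass_mono p hp0 hCK
        linarith
      · rw [if_neg hCK]
        refine max_le ?_ (mass_nonneg p hp0 K)
        have h1 := htv (K ∩ C) Finset.inter_subset_right
        rw [abs_le] at h1
        have h2 := mass_mono p hp0 (Finset.inter_subset_left (s₁ := K) (s₂ := C))
        linarith [h1.1]
end

section
/- Let ψ be a convex capacity on a finite set 𝒜, Π = core(ψ), and d : 𝒜 → X a function to a finite set X. Define ν on X by ν(K) = ψ(d⁻¹(K)). Then ν is a convex capacity on X, and core(ν) = {ρ_π : π ∈ Π}, where ρ_π(K) = π(d⁻¹(K)) is the pushforward of π under d. -/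
open Finset

variable {X : Type*} [Fintype X] [DecidableEq X]

section aux
variable {A : Type*} [Fintype A] [DecidableEq A]

/-- tight sets -/
def Tight (ψ : Finset A → ℝ) (π : A → ℝ) (B : Finset A) : Prop := mass π B = ψ B

lemma tight_union_inter {ψ : Finset A → ℝ} (hψ : IsConvexCap ψ) {π : A → ℝ} (hπ : π ∈ core ψ)
    {B C : Finset A} (hB : Tight ψ π B) (hC : Tight ψ π C) :
    Tight ψ π (B ∪ C) ∧ Tight ψ π (B ∩ C) := by
  have h1 := hψ.2 B C
  have h2 := hπ.2 (B ∪ C)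
  have h3 := hπ.2 (B ∩ C)
  have h4 : mass π (B ∪ C) + mass π (B ∩ C) = mass π B + mass π C := Finset.sum_union_inter
  unfold Tight at *
  constructor <;> linarith

attribute [local instance] Classical.propDecidable

/-- minimal tight set containing a -/
noncomputable def Tset (ψ : Finset A → ℝ) (π : A → ℝ) (a : A) : Finset A :=
  (Finset.univ.powerset.filter (fun B => a ∈ B ∧ Tight ψ π B)).inf id

lemma tight_univ {ψ : Finset A → ℝ} (hψ : IsConvexCap ψ) {π : A → ℝ} (hπ : π ∈ core ψ) :
    Tight ψ π Finset.univ := by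
  unfold Tight; rw [hψ.1.2.1]; exact hπ.1.2

lemma tight_empty {ψ : Finset A → ℝ} (hψ : IsConvexCap ψ) : Tight ψ π (∅ : Finset A) := by
  unfold Tight; rw [hψ.1.1]; simp [mass]

lemma Tset_tight {ψ : Finset A → ℝ} (hψ : IsConvexCap ψ) {π : A → ℝ} (hπ : π ∈ core ψ) (a : A) :
    Tight ψ π (Tset ψ π a) := by
  rw [Tset]
  apply Finset.inf_induction (p := Tight ψ π)
  · simpa [Finset.top_eq_univ] using tight_univ hψ hπ
  · intro B hB C hC
    simpa [Finset.inf_eq_inter] using (tight_union_inter hψ hπ hB hC).2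
  · intro B hB
    simp only [mem_filter, mem_powerset] at hB
    exact hB.2.2

lemma mem_Tset (ψ : Finset A → ℝ) (π : A → ℝ) (a : A) : a ∈ Tset ψ π a := by
  rw [← Finset.singleton_subset_iff, ← Finset.le_iff_subset, Tset, Finset.le_inf_iff]
  intro B hB
  simp only [mem_filter, mem_powerset] at hB
  simpa using hB.2.1

lemma Tset_subset {ψ : Finset A → ℝ} {π : A → ℝ} {a : A} {B : Finset A}
    (haB : a ∈ B) (hB : Tight ψ π B) : Tset ψ π a ⊆ B := by
  rw [Tset]
  have : B ∈ Finset.univ.powerset.filter (fun B => a ∈ B ∧ Tight ψ π B) := by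
    simp [haB, hB]
  exact Finset.inf_le (f := id) this

lemma core_nonempty_s10 (ψ : Finset A → ℝ) (hψ : IsConvexCap ψ) : (core ψ).Nonempty := by
  obtain ⟨⟨h0, h1, hmono⟩, hconv⟩ := hψ
  set n := Fintype.card A with hn
  obtain e := (Fintype.equivFin A)
  set S : ℕ → Finset A := fun k => univ.filter (fun a => (e a : ℕ) < k) with hS
  set π : A → ℝ := fun a => ψ (S ((e a : ℕ) + 1)) - ψ (S (e a)) with hπ
  have hSmono : ∀ {j k : ℕ}, j ≤ k → S j ⊆ S k := by
    intro j k hjk a ha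
    simp only [hS, mem_filter] at *
    exact ⟨ha.1, lt_of_lt_of_le ha.2 hjk⟩
  have hS0 : S 0 = ∅ := by
    ext a; simp [hS]
  have hSn : S n = univ := by
    ext a; simp [hS, hn, (e a).2]
  have hπnn : ∀ a, 0 ≤ π a := by
    intro a
    simpa [hπ] using sub_nonneg.2 (hmono (hSmono (Nat.le_succ _)))
  -- succ step
  have hSsucc : ∀ a : A, S ((e a : ℕ) + 1) = insert a (S (e a)) := by
    intro a
    ext b
    simp only [hS, mem_filter, mem_insert, mem_univ, true_and, Nat.lt_succ_iff]
    constructor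
    · intro hb
      rcases eq_or_lt_of_le hb with hb | hb
      · left; exact e.injective (Fin.ext hb)
      · right; exact hb
    · rintro (rfl | hb)
      · exact le_refl _
      · exact le_of_lt hb
  have htotal : ∑ a, π a = 1 := by
    have := Fintype.sum_equiv e (fun a => π a) (fun i : Fin n => ψ (S ((i:ℕ)+1)) - ψ (S (i:ℕ)))
      (by intro a; simp [hπ])
    rw [this, Fin.sum_univ_eq_sum_range (fun i => ψ (S (i+1)) - ψ (S i)) n,
      Finset.sum_range_sub (fun i => ψ (S i)) n, hS0, hSn, h0, h1]
    ring
  have hcore : ∀ B : Finset A, ψ B ≤ mass π B := by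
    intro B
    induction B using Finset.strongInduction with
    | _ B ih =>
      rcases B.eq_empty_or_nonempty with rfl | hBne
      · simp [mass, h0]
      · obtain ⟨a, haB, hamax⟩ := Finset.exists_max_image B (fun b => (e b : ℕ)) hBne
        set B' := B.erase a with hB'
        have hBsplit : B = insert a B' := by simp [hB', Finset.insert_erase haB]
        have hB'sub : B' ⊂ B := Finset.erase_ssubset haB
        have hB'S : B' ⊆ S (e a) := by
          intro b hb
          simp only [hS, mem_filter, mem_univ, true_and]
          have hbB : b ∈ B := (Finset.erase_subset _ _) hb
          have hne : b ≠ a := Finset.ne_of_mem_erase hb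
          have : (e b : ℕ) ≤ (e a : ℕ) := hamax b hbB
          rcases lt_or_eq_of_le this with h | h
          · exact h
          · exact absurd (e.injective (Fin.ext h)) hne
        have haS : a ∉ S (e a) := by simp [hS]
        have hkey : ψ B - ψ B' ≤ π a := by
          have hcv := hconv (insert a B') (S (e a))
          have hu : insert a B' ∪ S (e a) = S ((e a : ℕ) + 1) := by
            rw [hSsucc a]
            rw [Finset.insert_union]
            congr 1
            exact Finset.union_eq_right.2 hB'S
          have hi : insert a B' ∩ S (e a) = B' := by
            rw [Finset.insert_inter_of_notMem haS]
            exact Finset.inter_eq_left.2 hB'S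
          rw [hu, hi, ← hBsplit] at hcv
          simp only [hπ]
          linarith
        have hmass : mass π B = π a + mass π B' := by
          rw [hBsplit]; exact Finset.sum_insert (Finset.notMem_erase a B)
        have := ih B' hB'sub
        linarith
  exact ⟨π, ⟨⟨hπnn, htotal⟩, hcore⟩⟩



lemma core_isCompact (ψ : Finset A → ℝ) : IsCompact (core ψ) := by
  apply Metric.isCompact_of_isClosed_isBounded
  · have : core ψ = ((⋂ a : A, {p : A → ℝ | 0 ≤ p a}) ∩ {p : A → ℝ | ∑ a, p a = 1}) ∩
        ⋂ K : Finset A, {p : A → ℝ | ψ K ≤ mass p K} := by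
      ext p
      constructor
      · rintro ⟨⟨h1, h2⟩, h3⟩
        exact ⟨⟨Set.mem_iInter.2 h1, h2⟩, Set.mem_iInter.2 h3⟩
      · rintro ⟨⟨h1, h2⟩, h3⟩
        exact ⟨⟨Set.mem_iInter.1 h1, h2⟩, Set.mem_iInter.1 h3⟩
    rw [this]
    apply IsClosed.inter
    · apply IsClosed.inter
      · exact isClosed_iInter fun a => isClosed_le continuous_const (continuous_apply a)
      · exact isClosed_eq (continuous_finset_sum _ fun a _ => continuous_apply a) continuous_const
    · exact isClosed_iInter fun K =>
        isClosed_le continuous_const (continuous_finset_sum _ fun a _ => continuous_apply a)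
  · apply Bornology.IsBounded.subset (Metric.isBounded_closedBall (x := (0 : A → ℝ)) (r := 1))
    intro p hp
    obtain ⟨⟨hnn, htot⟩, -⟩ := hp
    rw [Metric.mem_closedBall]
    rw [dist_pi_le_iff (by norm_num)]
    intro a
    rw [Real.dist_eq]
    have h1 : p a ≤ 1 := by
      rw [← htot]
      exact Finset.single_le_sum (fun b _ => hnn b) (mem_univ a)
    have := hnn a
    rw [abs_sub_le_iff]
    constructor <;> simp <;> linarith

lemma exists_lift {Y : Type*} [Fintype Y] [DecidableEq Y] (ψ : Finset A → ℝ)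
    (hψ : IsConvexCap ψ) (d : A → Y) (ρ : Y → ℝ) (hρp : IsProb ρ)
    (hρ : ∀ K : Finset Y, ψ (univ.filter (fun a => d a ∈ K)) ≤ mass ρ K) :
    ∃ π ∈ core ψ, ∀ x, mass π (univ.filter (fun a => d a = x)) = ρ x := by
  obtain hne := core_nonempty_s10 ψ hψ
  have hcomp : IsCompact (core ψ) := core_isCompact ψ
  set F : Y → Finset A := fun x => univ.filter (fun a => d a = x) with hF
  set f : (A → ℝ) → ℝ := fun p => ∑ x, (mass p (F x) - ρ x)^2 with hf
  have hfc : Continuous f := by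
    apply continuous_finset_sum
    intro x _
    exact ((continuous_finset_sum _ fun a _ => continuous_apply a).sub continuous_const).pow 2
  obtain ⟨π, hπ, hmin⟩ := hcomp.exists_isMinOn hne hfc.continuousOn
  refine ⟨π, hπ, ?_⟩
  set s : Y → ℝ := fun x => mass π (F x) - ρ x with hs
  clear_value s
  suffices hzero : ∀ x, s x = 0 by
    intro x
    have := hzero x
    simp only [hs] at this
    linarith [this]
  by_contra hcon
  push_neg at hcon
  obtain ⟨x₀, hx₀⟩ := hcon
  have hXne : (univ : Finset Y).Nonempty := ⟨x₀, mem_univ x₀⟩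
  have hsum_fib : ∑ x, mass π (F x) = 1 := by
    have := Finset.sum_fiberwise_eq_sum_filter (univ : Finset A) (univ : Finset Y) d π
    simp only [mem_univ, Finset.filter_true] at this
    calc ∑ x, mass π (F x) = ∑ a, π a := by rw [← this]; rfl
    _ = 1 := hπ.1.2
  have hssum : ∑ x, s x = 0 := by
    simp only [hs, Finset.sum_sub_distrib]
    rw [hsum_fib, hρp.2]
    ring
  obtain ⟨y₀, -, hy₀min⟩ := Finset.exists_min_image univ s hXne
  set m := s y₀ with hm
  clear_value m
  have hmin_le : ∀ z, m ≤ s z := fun z => hy₀min z (mem_univ z)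
  have hmneg : m < 0 := by
    rcases lt_or_ge m 0 with h | h
    · exact h
    · exfalso
      have hnn : ∀ z ∈ (univ : Finset Y), 0 ≤ s z := fun z _ => le_trans h (hmin_le z)
      have := (Finset.sum_eq_zero_iff_of_nonneg hnn).1 hssum x₀ (mem_univ x₀)
      exact hx₀ this
  -- key exchange claim
  have hkey : ∀ a : A, s (d a) ≠ m → ∀ b, b ∈ Tset ψ π a → s (d b) ≠ m := by
    intro a ha b hb hby
    have hsx : m < s (d a) := lt_of_le_of_ne (hmin_le _) (Ne.symm ha)
    have hdab : d b ≠ d a := by intro h; rw [h] at hby; exact ha hby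
    have hab : a ≠ b := fun h => hdab (by rw [h])
    -- choose ε
    set g : Finset A → ℝ := fun B => if Tight ψ π B then (s (d a) - m)/2 else mass π B - ψ B
      with hg
    obtain ⟨B₀, -, hgmin⟩ := Finset.exists_min_image univ.powerset g ⟨∅, by simp⟩
    set ε := min (g B₀) ((s (d a) - m)/2) with hε
    have hgpos : ∀ B : Finset A, 0 < g B := by
      intro B
      show 0 < if Tight ψ π B then (s (d a) - m)/2 else mass π B - ψ B
      by_cases hT : Tight ψ π B
      · rw [if_pos hT]; linarith
      · rw [if_neg hT]
        have h1 := hπ.2 B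
        have h2 : mass π B ≠ ψ B := hT
        cases lt_or_eq_of_le h1 with
        | inl h => linarith
        | inr h => exact absurd h.symm h2
    have hεpos : 0 < ε := lt_min (hgpos B₀) (by linarith)
    have hεslack : ∀ B : Finset A, ¬ Tight ψ π B → ε ≤ mass π B - ψ B := by
      intro B hB
      have h1 : g B₀ ≤ g B := hgmin B (by simp)
      have h2 : g B = mass π B - ψ B := if_neg hB
      calc ε ≤ g B₀ := min_le_left _ _
      _ ≤ g B := h1
      _ = _ := h2
    have hεlt : ε < s (d a) - m := lt_of_le_of_lt (min_le_right _ _) (by linarith)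
    set π' : A → ℝ := fun c => π c + ε * ((if c = b then 1 else 0) - (if c = a then 1 else 0))
      with hπ'
    have hmass' : ∀ B : Finset A, mass π' B
        = mass π B + ε * ((if b ∈ B then (1:ℝ) else 0) - (if a ∈ B then 1 else 0)) := by
      intro B
      have h1 : ∑ c ∈ B, (if c = b then (1:ℝ) else 0) = if b ∈ B then 1 else 0 := by
        rw [Finset.sum_ite_eq' B b (fun _ => (1:ℝ))]
      have h2 : ∑ c ∈ B, (if c = a then (1:ℝ) else 0) = if a ∈ B then 1 else 0 := by
        rw [Finset.sum_ite_eq' B a (fun _ => (1:ℝ))]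
      simp only [mass, hπ', Finset.sum_add_distrib, ← Finset.mul_sum, Finset.sum_sub_distrib,
        h1, h2]
    have hdom : ∀ B : Finset A, ψ B ≤ mass π' B := by
      intro B
      rw [hmass' B]
      by_cases hT : Tight ψ π B
      · by_cases haB : a ∈ B
        · have hbB : b ∈ B := Tset_subset haB hT hb
          simp only [haB, hbB, if_true]
          have : mass π B = ψ B := hT
          linarith
        · have h1 := hπ.2 B
          simp only [haB, if_false]
          by_cases hbB : b ∈ B <;> simp only [hbB, if_true, if_false] <;> nlinarith
      · have h1 := hεslack B hT
        by_cases haB : a ∈ B <;> by_cases hbB : b ∈ B <;>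
          simp only [haB, hbB, if_true, if_false] <;> nlinarith [hπ.2 B]
    have htot' : ∑ c, π' c = 1 := by
      have := hmass' univ
      simp only [mass] at this
      rw [this]
      simp [hπ.1.2]
    have hnn' : ∀ c, 0 ≤ π' c := by
      intro c
      have h1 := hdom {c}
      have h2 : mass π' {c} = π' c := Finset.sum_singleton _ _
      have h3 : (0:ℝ) ≤ ψ {c} := by
        have := hψ.1.2.2 (Finset.empty_subset {c})
        rw [hψ.1.1] at this
        exact this
      linarith
    have hπ'core : π' ∈ core ψ := ⟨⟨hnn', htot'⟩, hdom⟩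
    -- f decreases
    have hFmass : ∀ z, mass π' (F z)
        = mass π (F z) + ε * ((if z = d b then 1 else 0) - (if z = d a then 1 else 0)) := by
      intro z
      rw [hmass' (F z)]
      have h1 : (b ∈ F z) ↔ (z = d b) := by simp [hF, eq_comm]
      have h2 : (a ∈ F z) ↔ (z = d a) := by simp [hF, eq_comm]
      simp only [h1, h2]
    have hflt : f π' < f π := by
      have hexp : ∀ z, (mass π' (F z) - ρ z)^2
          = (s z)^2 + (if z = d b then 2*ε*(s z) + ε^2 else 0)
            + (if z = d a then -(2*ε*(s z)) + ε^2 else 0) := by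
        intro z
        have hsz : mass π (F z) = s z + ρ z := by rw [hs]; ring
        rw [hFmass z, hsz]
        rcases eq_or_ne z (d b) with h1 | h1 <;> rcases eq_or_ne z (d a) with h2 | h2
        · exact absurd (h1.symm.trans h2) hdab
        · simp only [if_pos h1, if_neg h2]; ring
        · simp only [if_neg h1, if_pos h2]; ring
        · simp only [if_neg h1, if_neg h2]; ring
      have hfπ : f π = ∑ z, (s z)^2 := by
        rw [hf]
        exact Finset.sum_congr rfl fun z _ => by rw [hs]
      have hsum' : f π' = f π + (2*ε*(s (d b)) + ε^2) + (-(2*ε*(s (d a))) + ε^2) := by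
        calc f π' = ∑ z, ((s z)^2 + (if z = d b then 2*ε*(s z) + ε^2 else 0)
            + (if z = d a then -(2*ε*(s z)) + ε^2 else 0)) := by
              rw [hf]; exact Finset.sum_congr rfl fun z _ => hexp z
        _ = (∑ z, (s z)^2) + (2*ε*(s (d b)) + ε^2) + (-(2*ε*(s (d a))) + ε^2) := by
              rw [Finset.sum_add_distrib, Finset.sum_add_distrib,
                Finset.sum_ite_eq' univ (d b) (fun z => 2*ε*(s z) + ε^2),
                Finset.sum_ite_eq' univ (d a) (fun z => -(2*ε*(s z)) + ε^2)]
              simp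
        _ = _ := by rw [hfπ]
      rw [hsum']
      have hsb : s (d b) = m := hby
      rw [hsb]
      nlinarith
    exact absurd (hmin hπ'core) (not_le.2 hflt)
  -- the tight union contradiction
  set K : Finset Y := univ.filter (fun z => ¬ s z = m) with hK
  set Bstar := (univ.filter (fun a : A => d a ∈ K)).sup (Tset ψ π) with hBstar
  have hBtight : Tight ψ π Bstar :=
    Finset.sup_induction (tight_empty hψ)
      (fun B hB C hC => (tight_union_inter hψ hπ hB hC).1)
      (fun a _ => Tset_tight hψ hπ a)
  have hBeq : Bstar = univ.filter (fun a => d a ∈ K) := by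
    apply Finset.Subset.antisymm
    · intro b hb
      rw [hBstar, Finset.mem_sup] at hb
      obtain ⟨a, ha, hba⟩ := hb
      simp only [mem_filter, mem_univ, true_and, hK] at ha ⊢
      exact hkey a ha b hba
    · intro a ha
      rw [hBstar, Finset.mem_sup]
      exact ⟨a, ha, mem_Tset _ _ a⟩
  have h1 : mass π Bstar = ψ Bstar := hBtight
  have h2 : ψ Bstar ≤ mass ρ K := by rw [hBeq]; exact hρ K
  have h3 : mass π Bstar = mass ρ K + ∑ z ∈ K, s z := by
    rw [hBeq]
    have := Finset.sum_fiberwise_eq_sum_filter (univ : Finset A) K d π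
    have hKmass : mass π (univ.filter (fun a => d a ∈ K)) = ∑ z ∈ K, mass π (F z) := by
      rw [mass, ← this]; rfl
    rw [hKmass]
    have : ∀ z, mass π (F z) = ρ z + s z := by intro z; simp [hs]
    simp only [this, Finset.sum_add_distrib]
    rw [mass]
  have h4 : ∑ z ∈ K, s z ≤ 0 := by linarith
  have h5 : ∑ z ∈ K, s z = - ∑ z ∈ univ.filter (fun z => s z = m), s z := by
    have := Finset.sum_filter_add_sum_filter_not (univ : Finset Y) (fun z => s z = m) s
    rw [hssum] at this
    rw [hK]
    linarith
  have hYsum : ∑ z ∈ univ.filter (fun z => s z = m), s z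
      = (univ.filter (fun z => s z = m)).card * m := by
    rw [Finset.sum_congr rfl (fun z hz => (mem_filter.1 hz).2), Finset.sum_const, nsmul_eq_mul]
  have hYne : y₀ ∈ univ.filter (fun z => s z = m) := by simp [hm]
  have hcard : 1 ≤ (univ.filter (fun z => s z = m)).card := Finset.card_pos.2 ⟨y₀, hYne⟩
  have hcard' : (1:ℝ) ≤ (univ.filter (fun z => s z = m)).card := by exact_mod_cast hcard
  nlinarith [h4, h5, hYsum]

end aux


/-- Pushforward of a convex capacity under d is convex, and its core is the set of
pushforwards of measures in the original core. -/
theorem stmt10 {A : Type*} [Fintype A] [DecidableEq A] (ψ : Finset A → ℝ)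
    (hψ : IsConvexCap ψ) (d : A → X) (ν : Finset X → ℝ)
    (hν : ∀ K : Finset X, ν K = ψ (Finset.univ.filter (fun a => d a ∈ K))) :
    IsConvexCap ν ∧
      core ν = {ρ | ∃ π ∈ core ψ,
        ρ = fun x => ∑ a ∈ Finset.univ.filter (fun a => d a = x), π a} := by
  obtain ⟨⟨h0, h1, hmono⟩, hconv⟩ := hψ
  set P : Finset X → Finset A := fun K => Finset.univ.filter (fun a => d a ∈ K) with hP
  have hPunion : ∀ K L, P (K ∪ L) = P K ∪ P L := by
    intro K L; ext a; simp only [hP, mem_filter, mem_univ, true_and, mem_union]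
  have hPinter : ∀ K L, P (K ∩ L) = P K ∩ P L := by
    intro K L; ext a; simp only [hP, mem_filter, mem_univ, true_and, mem_inter]
  have hPmono : ∀ ⦃K L : Finset X⦄, K ⊆ L → P K ⊆ P L := by
    intro K L hKL a ha
    simp only [hP, mem_filter, mem_univ, true_and] at *
    exact hKL ha
  have hcap : IsConvexCap ν := by
    refine ⟨⟨?_, ?_, ?_⟩, ?_⟩
    · rw [hν]
      have : P ∅ = ∅ := by ext a; simp [hP]
      rw [hP] at this  -- align
      rw [show (Finset.univ.filter (fun a => d a ∈ (∅ : Finset X))) = (∅ : Finset A) from this]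
      exact h0
    · rw [hν]
      have : (Finset.univ.filter (fun a => d a ∈ (Finset.univ : Finset X))) = (Finset.univ : Finset A) := by
        ext a; simp
      rw [this]; exact h1
    · intro K L hKL
      rw [hν, hν]
      exact hmono (hPmono hKL)
    · intro K L
      rw [hν, hν, hν, hν]
      have := hconv (P K) (P L)
      rw [← hPunion, ← hPinter] at this
      exact this
  refine ⟨hcap, ?_⟩
  ext ρ
  constructor
  · intro hρ
    obtain ⟨π, hπc, hfib⟩ := exists_lift ψ ⟨⟨h0, h1, hmono⟩, hconv⟩ d ρ hρ.1
      (fun K => by rw [← hν]; exact hρ.2 K)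
    exact ⟨π, hπc, funext fun x => (hfib x).symm⟩
  · rintro ⟨π, hπ, rfl⟩
    have hfibsum : ∀ K : Finset X,
        ∑ x ∈ K, ∑ a ∈ Finset.univ.filter (fun a => d a = x), π a
          = ∑ a ∈ Finset.univ.filter (fun a => d a ∈ K), π a := fun K =>
      Finset.sum_fiberwise_eq_sum_filter Finset.univ K d π
    refine ⟨⟨fun x => Finset.sum_nonneg fun a _ => hπ.1.1 a, ?_⟩, ?_⟩
    · rw [show ∑ x, ∑ a ∈ Finset.univ.filter (fun a => d a = x), π a
          = ∑ a ∈ Finset.univ.filter (fun a => d a ∈ (Finset.univ : Finset X)), π a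
          from hfibsum Finset.univ]
      rw [show (Finset.univ.filter (fun a => d a ∈ (Finset.univ : Finset X))) = Finset.univ by ext a; simp]
      exact hπ.1.2
    · intro K
      rw [hν K]
      calc ψ (Finset.univ.filter (fun a => d a ∈ K))
          ≤ mass π (Finset.univ.filter (fun a => d a ∈ K)) := hπ.2 _
        _ = mass (fun x => ∑ a ∈ Finset.univ.filter (fun a => d a = x), π a) K := by
            rw [mass, mass, ← hfibsum K]
end

section
/- Let ν be a convex capacity on a finite set X and let K_1 ⊆ K_2 ⊆ ... ⊆ K_m be a chain of subsets of X. Then there exists a probability measure p in core(ν) with p(K_j) = ν(K_j) for every j = 1,...,m. -/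
open Finset

variable {X : Type*} [Fintype X] [DecidableEq X]

/-! ### Auxiliary machinery for the greedy algorithm -/

/-- Concatenation of the first `k` blocks. -/
def lup (blk : ℕ → List X) : ℕ → List X
  | 0 => []
  | (i+1) => lup blk i ++ blk i

lemma mem_lup (blk : ℕ → List X) (x : X) :
    ∀ k, (x ∈ lup blk k ↔ ∃ i, i < k ∧ x ∈ blk i)
  | 0 => by simp [lup]
  | (k+1) => by
    simp only [lup, List.mem_append, mem_lup blk x k]
    constructor
    · rintro (⟨i, hi, hxi⟩ | hx)
      · exact ⟨i, by omega, hxi⟩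
      · exact ⟨k, by omega, hx⟩
    · rintro ⟨i, hi, hxi⟩
      rcases Nat.lt_or_ge i k with h | h
      · exact Or.inl ⟨i, h, hxi⟩
      · have : i = k := by omega
        subst this; exact Or.inr hxi

lemma nodup_lup (blk : ℕ → List X) (hnd : ∀ i, (blk i).Nodup)
    (hdisj : ∀ x i i', x ∈ blk i → x ∈ blk i' → i = i') :
    ∀ k, (lup blk k).Nodup
  | 0 => List.nodup_nil
  | (k+1) => by
    rw [lup, List.nodup_append]
    refine ⟨nodup_lup blk hnd hdisj k, hnd k, ?_⟩
    intro x hx y hx' hxy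
    subst hxy
    rw [mem_lup] at hx
    obtain ⟨i, hi, hxi⟩ := hx
    have := hdisj x i k hxi hx'
    omega

lemma lup_prefix (blk : ℕ → List X) : ∀ {i k : ℕ}, i ≤ k → ∃ s, lup blk k = lup blk i ++ s := by
  intro i k
  induction k with
  | zero =>
    intro h
    have : i = 0 := Nat.le_zero.mp h
    subst this
    exact ⟨[], rfl⟩
  | succ k ih =>
    intro h
    rcases Nat.eq_or_lt_of_le h with heq | hlt
    · subst heq; exact ⟨[], by simp⟩
    · obtain ⟨s, hs⟩ := ih (by omega)
      exact ⟨s ++ blk k, by rw [lup, hs, List.append_assoc]⟩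

/-- The greedy probability mass function induced by a list enumeration. -/
noncomputable def gp (ν : Finset X → ℝ) (L : List X) (x : X) : ℝ :=
  ν ((L.take (L.idxOf x + 1)).toFinset) - ν ((L.take (L.idxOf x)).toFinset)

lemma take_toFinset_mono (L : List X) {k l : ℕ} (h : k ≤ l) :
    (L.take k).toFinset ⊆ (L.take l).toFinset := by
  intro x hx
  rw [List.mem_toFinset] at hx ⊢
  have h1 : L.take k = (L.take l).take k := by
    rw [List.take_take, Nat.min_eq_left h]
  rw [h1] at hx
  exact List.take_subset _ _ hx

lemma gp_nonneg (ν : Finset X → ℝ)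
    (hmono : ∀ ⦃A B : Finset X⦄, A ⊆ B → ν A ≤ ν B) (L : List X) (x : X) :
    0 ≤ gp ν L x := by
  have := hmono (take_toFinset_mono L (Nat.le_succ (L.idxOf x)))
  simp only [gp]
  linarith

lemma take_succ_toFinset (L : List X) {k : ℕ} (hk : k < L.length) :
    (L.take (k+1)).toFinset = insert (L[k]) ((L.take k).toFinset) := by
  rw [← List.take_concat_get' L k hk, List.toFinset_append]
  ext y
  simp [or_comm]

lemma getElem_not_mem_take_s11 (L : List X) (hnd : L.Nodup) {k : ℕ} (hk : k < L.length) :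
    L[k] ∉ (L.take k).toFinset := by
  intro hmem
  rw [List.mem_toFinset] at hmem
  obtain ⟨i, hi, hEq⟩ := List.mem_iff_getElem.mp hmem
  have hik : i < k := by
    rw [List.length_take] at hi; omega
  rw [List.getElem_take] at hEq
  have := hnd.getElem_inj_iff.mp hEq
  omega

lemma mass_insert (p : X → ℝ) {a : X} {s : Finset X} (h : a ∉ s) :
    mass p (insert a s) = p a + mass p s := Finset.sum_insert h

lemma mass_gp_take (ν : Finset X → ℝ) (h0 : ν ∅ = 0) (L : List X) (hnd : L.Nodup) :
    ∀ k, k ≤ L.length → mass (gp ν L) ((L.take k).toFinset) = ν ((L.take k).toFinset)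
  | 0, _ => by simp [mass, h0]
  | (k+1), hk => by
    have hkl : k < L.length := hk
    have hidx : L.idxOf (L[k]) = k := List.Nodup.idxOf_getElem hnd k hkl
    rw [take_succ_toFinset L hkl, mass_insert _ (getElem_not_mem_take_s11 L hnd hkl),
        mass_gp_take ν h0 L hnd k (le_of_lt hkl), ← take_succ_toFinset L hkl]
    simp only [gp, hidx]
    ring

lemma core_gp_take (ν : Finset X → ℝ) (h0 : ν ∅ = 0)
    (hmono : ∀ ⦃A B : Finset X⦄, A ⊆ B → ν A ≤ ν B)
    (hconv : ∀ A B : Finset X, ν A + ν B ≤ ν (A ∪ B) + ν (A ∩ B))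
    (L : List X) (hnd : L.Nodup) :
    ∀ k, k ≤ L.length → ∀ B : Finset X, B ⊆ (L.take k).toFinset → ν B ≤ mass (gp ν L) B
  | 0, _, B, hB => by
    have : B = ∅ := Finset.subset_empty.mp (by simpa using hB)
    subst this
    simp [mass, h0]
  | (k+1), hk, B, hB => by
    have hkl : k < L.length := hk
    have hidx : L.idxOf (L[k]) = k := List.Nodup.idxOf_getElem hnd k hkl
    rw [take_succ_toFinset L hkl] at hB
    by_cases ha : L[k] ∈ B
    · have hB' : B.erase (L[k]) ⊆ (L.take k).toFinset := Finset.subset_insert_iff.mp hB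
      have hIH := core_gp_take ν h0 hmono hconv L hnd k (le_of_lt hkl) _ hB'
      have hanotA : L[k] ∉ (L.take k).toFinset := getElem_not_mem_take_s11 L hnd hkl
      have hcap : B ∩ (L.take k).toFinset = B.erase (L[k]) := by
        ext y
        simp only [Finset.mem_inter, Finset.mem_erase]
        constructor
        · rintro ⟨hyB, hyA⟩
          exact ⟨fun h => hanotA (h ▸ hyA), hyB⟩
        · rintro ⟨hy, hyB⟩
          rcases Finset.mem_insert.mp (hB hyB) with h | h
          · exact absurd h hy
          · exact ⟨hyB, h⟩
      have hcup : ν (B ∪ (L.take k).toFinset) ≤ ν ((L.take (k+1)).toFinset) := by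
        apply hmono
        rw [take_succ_toFinset L hkl]
        intro y hy
        rcases Finset.mem_union.mp hy with h | h
        · exact hB h
        · exact Finset.mem_insert_of_mem h
      have hconv' := hconv B ((L.take k).toFinset)
      rw [hcap] at hconv'
      have hmassB : mass (gp ν L) B
          = gp ν L (L[k]) + mass (gp ν L) (B.erase (L[k])) := by
        rw [← mass_insert _ (Finset.notMem_erase _ _), Finset.insert_erase ha]
      have hgp : gp ν L (L[k])
          = ν ((L.take (k+1)).toFinset) - ν ((L.take k).toFinset) := by
        simp only [gp, hidx]
      rw [hmassB]
      linarith
    · refine core_gp_take ν h0 hmono hconv L hnd k (le_of_lt hkl) B (fun y hy => ?_)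
      rcases Finset.mem_insert.mp (hB hy) with h | h
      · exact absurd (h ▸ hy) ha
      · exact h

/-- For a convex capacity and any chain of subsets, some core element attains the
capacity simultaneously on all members of the chain. -/
theorem stmt11 (ν : Finset X → ℝ) (hν : IsConvexCap ν) (m : ℕ)
    (K : Fin m → Finset X) (hchain : ∀ i j : Fin m, i ≤ j → K i ⊆ K j) :
    ∃ p ∈ core ν, ∀ j : Fin m, mass p (K j) = ν (K j) := by
  classical
  obtain ⟨⟨h0, h1, hmono⟩, hconv⟩ := hν
  set lev : X → ℕ := fun x => (univ.filter fun j : Fin m => x ∉ K j).card with hlev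
  have lev_iff : ∀ (x : X) (j : Fin m), x ∈ K j ↔ lev x ≤ j.1 := by
    intro x j
    constructor
    · intro hx
      have hsub : (univ.filter fun j' : Fin m => x ∉ K j') ⊆ Finset.Iio j := by
        intro j' hj'
        simp only [mem_filter] at hj'
        rw [Finset.mem_Iio]
        by_contra hle
        push_neg at hle
        exact hj'.2 (hchain j j' hle hx)
      have := Finset.card_le_card hsub
      rw [Fin.card_Iio] at this
      simpa only [hlev] using this
    · intro hx
      by_contra hxK
      have hsub : Finset.Iic j ⊆ (univ.filter fun j' : Fin m => x ∉ K j') := by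
        intro j' hj'
        rw [Finset.mem_Iic] at hj'
        simp only [mem_filter, mem_univ, true_and]
        intro hx'
        exact hxK (hchain j' j hj' hx')
      have := Finset.card_le_card hsub
      rw [Fin.card_Iic] at this
      simp only [hlev] at hx
      omega
  have lev_lt : ∀ x, lev x < m + 1 := by
    intro x
    have : (univ.filter fun j : Fin m => x ∉ K j).card ≤ (univ : Finset (Fin m)).card :=
      Finset.card_le_card (filter_subset _ _)
    simp only [Finset.card_univ, Fintype.card_fin] at this
    simp only [hlev]
    omega
  set blk : ℕ → List X := fun i => ((univ.filter fun x => lev x = i)).toList with hblk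
  have hmemblk : ∀ (x : X) (i : ℕ), x ∈ blk i ↔ lev x = i := by
    intro x i
    simp [hblk]
  set L : List X := lup blk (m+1) with hL
  have hndL : L.Nodup := nodup_lup blk (fun i => Finset.nodup_toList _)
      (fun x i i' hi hi' => by
        rw [hmemblk] at hi hi'; omega) (m+1)
  have hmemL : ∀ x, x ∈ L := fun x =>
    (mem_lup blk x (m+1)).2 ⟨lev x, lev_lt x, (hmemblk x _).2 rfl⟩
  have hunivL : L.toFinset = univ := by
    ext x; simp [hmemL]
  have hKj : ∀ j : Fin m, (lup blk (j.1+1)).toFinset = K j := by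
    intro j
    ext x
    rw [List.mem_toFinset, mem_lup, lev_iff x j]
    constructor
    · rintro ⟨i, hi, hxi⟩; rw [hmemblk] at hxi; omega
    · intro h; exact ⟨lev x, by omega, (hmemblk x _).2 rfl⟩
  have htake : ∀ j : Fin m, L.take ((lup blk (j.1+1)).length) = lup blk (j.1+1) := by
    intro j
    obtain ⟨s, hs⟩ := lup_prefix blk (show j.1+1 ≤ m+1 by omega)
    rw [hL, hs, List.take_left]
  have htlen : ∀ j : Fin m, (lup blk (j.1+1)).length ≤ L.length := by
    intro j
    obtain ⟨s, hs⟩ := lup_prefix blk (show j.1+1 ≤ m+1 by omega)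
    rw [hL, hs, List.length_append]
    omega
  have hmassL := mass_gp_take ν h0 L hndL L.length le_rfl
  rw [List.take_length, hunivL] at hmassL
  refine ⟨gp ν L, ⟨⟨fun a => gp_nonneg ν hmono L a, ?_⟩, ?_⟩, ?_⟩
  · show mass (gp ν L) univ = 1
    rw [hmassL, h1]
  · intro B
    refine core_gp_take ν h0 hmono hconv L hndL L.length le_rfl B ?_
    rw [List.take_length, hunivL]
    exact Finset.subset_univ B
  · intro j
    have := mass_gp_take ν h0 L hndL _ (htlen j)
    rwa [htake j, hKj j] at this
end

section
/- Let 𝒟 be a finite set of decision rules, X a finite set, C_d ⊆ X nonempty for each d ∈ 𝒟, and λ a probability measure on X. Under complete ignorance (ℛ_d = Δ(C_d)), a probability measure Q on 𝒟 rationalizes λ — i.e., there exist ρ_d ∈ Δ(C_d) with λ = Σ_d Q(d)ρ_d — if and only if λ(K) ≥ Q({d : C_d ⊆ K}) for all K ⊆ X. -/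
open Finset

variable {X : Type*} [Fintype X] [DecidableEq X]

section AuxGale

open scoped Classical

variable {D : Type*} [Fintype D] [DecidableEq D]

/-- The belief function induced by `C` and `Q`. -/
def nuF (C : D → Finset X) (Q : D → ℝ) (K : Finset X) : ℝ :=
  ∑ d, if C d ⊆ K then Q d else 0

lemma nuF_nonneg {C : D → Finset X} {Q : D → ℝ} (hQ : ∀ d, 0 ≤ Q d) (K : Finset X) :
    0 ≤ nuF C Q K :=
  Finset.sum_nonneg fun d _ => by by_cases h : C d ⊆ K <;> simp [h, hQ d]

/-- Solution concept: an exact decomposition. -/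
def Sol (C : D → Finset X) (lam : X → ℝ) (Q : D → ℝ) : Prop :=
  ∃ ρ : D → X → ℝ, (∀ d a, 0 ≤ ρ d a) ∧ (∀ d a, a ∉ C d → ρ d a = 0) ∧
    (∀ d, ∑ a, ρ d a = Q d) ∧ (∀ a, ∑ d, ρ d a = lam a)

/-- Hypotheses of the feasibility problem relative to a ground set `S`. -/
def Hyp (S : Finset X) (C : D → Finset X) (lam : X → ℝ) (Q : D → ℝ) : Prop :=
  (∀ d, (C d).Nonempty) ∧ (∀ d, C d ⊆ S) ∧ (∀ a, 0 ≤ lam a) ∧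
  (∀ a, a ∉ S → lam a = 0) ∧ (∀ d, 0 ≤ Q d) ∧ (∑ a, lam a = ∑ d, Q d) ∧
  (∀ K, K ⊆ S → nuF C Q K ≤ ∑ a ∈ K, lam a)

lemma row_zero {ι : Type*} [Fintype ι] {ρ : ι → ℝ} (h0 : ∀ a, 0 ≤ ρ a)
    (h : ∑ a, ρ a = 0) (a : ι) : ρ a = 0 :=
  (Finset.sum_eq_zero_iff_of_nonneg (fun i _ => h0 i)).1 h a (mem_univ a)

lemma bound_lt {Dc a b c m : ℕ} (h1 : c ≤ Dc) (h2 : a < b) (h3 : (Dc+1)*b ≤ m) :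
    (Dc+1)*a + c < m := by
  calc (Dc+1)*a + c < (Dc+1)*a + (Dc+1) := by omega
    _ = (Dc+1)*(a+1) := by ring
    _ ≤ (Dc+1)*b := Nat.mul_le_mul_left _ h2
    _ ≤ m := h3

/-- Splitting step at a tight set. -/
lemma split_step {S : Finset X} {C : D → Finset X} {lam : X → ℝ} {Q : D → ℝ} {K : Finset X}
    (rec : ∀ (S' : Finset X) (C' : D → Finset X) (lam' : X → ℝ) (Q' : D → ℝ),
      S'.card < S.card → Hyp S' C' lam' Q' → Sol C' lam' Q')
    (h : Hyp S C lam Q) (hKS : K ⊆ S) (hKne : K.Nonempty) (hKneS : K ≠ S)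
    (htight : nuF C Q K = ∑ a ∈ K, lam a) : Sol C lam Q := by
  obtain ⟨hCne, hCS, hlam0, hlamS, hQ0, htot, hcut⟩ := h
  obtain ⟨k0, hk0⟩ := hKne
  have hSKne : (S \ K).Nonempty := by
    rw [Finset.sdiff_nonempty]
    intro hSK
    exact hKneS (Finset.Subset.antisymm hKS hSK)
  obtain ⟨s0, hs0⟩ := hSKne
  have hcard1 : K.card < S.card :=
    Finset.card_lt_card (HasSubset.Subset.ssubset_of_ne hKS hKneS)
  have hcard2 : (S \ K).card < S.card := by
    have h1 := Finset.card_sdiff_of_subset hKS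
    have hKpos : 0 < K.card := Finset.card_pos.mpr ⟨k0, hk0⟩
    have hKle := Finset.card_le_card hKS
    omega
  -- data for the two subproblems
  set C1 : D → Finset X := fun d => if C d ⊆ K then C d else {k0} with hC1def
  set Q1 : D → ℝ := fun d => if C d ⊆ K then Q d else 0 with hQ1def
  set lam1 : X → ℝ := fun a => if a ∈ K then lam a else 0 with hlam1def
  set C2 : D → Finset X := fun d => if C d ⊆ K then {s0} else C d \ K with hC2def
  set Q2 : D → ℝ := fun d => if C d ⊆ K then 0 else Q d with hQ2def
  set lam2 : X → ℝ := fun a => if a ∈ S \ K then lam a else 0 with hlam2def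
  -- basic sums
  have hsumlam1 : ∑ a, lam1 a = ∑ a ∈ K, lam a := by
    rw [hlam1def]
    rw [Finset.sum_ite_mem, Finset.univ_inter]
  have hsumQ1 : ∑ d, Q1 d = nuF C Q K := rfl
  have hlamS' : ∑ a ∈ S, lam a = ∑ a, lam a :=
    Finset.sum_subset (Finset.subset_univ S) (fun a _ ha => hlamS a ha)
  have hsumlam2 : ∑ a, lam2 a = ∑ a ∈ S \ K, lam a := by
    rw [hlam2def]
    rw [Finset.sum_ite_mem, Finset.univ_inter]
  have hsdiff : ∑ a ∈ S \ K, lam a + ∑ a ∈ K, lam a = ∑ a ∈ S, lam a :=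
    Finset.sum_sdiff hKS
  have hsumQ2 : ∑ d, Q2 d = ∑ d, Q d - nuF C Q K := by
    rw [nuF, ← Finset.sum_sub_distrib]
    apply Finset.sum_congr rfl
    intro d _
    by_cases hd : C d ⊆ K <;> simp [hQ2def, hd]
  -- Hyp for subproblem 1
  have hyp1 : Hyp K C1 lam1 Q1 := by
    refine ⟨?_, ?_, ?_, ?_, ?_, ?_, ?_⟩
    · intro d
      rw [hC1def]
      by_cases hd : C d ⊆ K <;> simp [hd, hCne d]
    · intro d
      rw [hC1def]
      by_cases hd : C d ⊆ K <;> simp [hd, hk0]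
    · intro a
      rw [hlam1def]
      by_cases ha : a ∈ K <;> simp [ha, hlam0 a]
    · intro a ha
      rw [hlam1def]
      simp [ha]
    · intro d
      rw [hQ1def]
      by_cases hd : C d ⊆ K <;> simp [hd, hQ0 d]
    · rw [hsumlam1, hsumQ1]
      exact htight.symm
    · intro L hLK
      have hnu1 : nuF C1 Q1 L = nuF C Q L := by
        apply Finset.sum_congr rfl
        intro d _
        by_cases hd : C d ⊆ K
        · simp [hC1def, hQ1def, hd]
        · have hnotL : ¬ C d ⊆ L := fun hL => hd (hL.trans hLK)
          simp [hC1def, hQ1def, hd, hnotL]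
      have hrhs : ∑ a ∈ L, lam1 a = ∑ a ∈ L, lam a := by
        apply Finset.sum_congr rfl
        intro a ha
        simp [hlam1def, hLK ha]
      rw [hnu1, hrhs]
      exact hcut L (hLK.trans hKS)
  -- Hyp for subproblem 2
  have hs0S : s0 ∈ S \ K := hs0
  have hyp2 : Hyp (S \ K) C2 lam2 Q2 := by
    refine ⟨?_, ?_, ?_, ?_, ?_, ?_, ?_⟩
    · intro d
      rw [hC2def]
      by_cases hd : C d ⊆ K
      · simp [hd]
      · simp [hd, Finset.sdiff_nonempty.mpr hd]
    · intro d
      rw [hC2def]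
      by_cases hd : C d ⊆ K
      · simp [hd, hs0S]
      · simp only [if_neg hd]
        exact Finset.sdiff_subset_sdiff (hCS d) le_rfl
    · intro a
      rw [hlam2def]
      by_cases ha : a ∈ S \ K <;> simp [ha, hlam0 a]
    · intro a ha
      rw [hlam2def]
      simp [ha]
    · intro d
      rw [hQ2def]
      by_cases hd : C d ⊆ K <;> simp [hd, hQ0 d]
    · rw [hsumlam2, hsumQ2]
      linarith [hsdiff, hlamS', htot, htight]
    · intro L hL
      have hLS : L ⊆ S := hL.trans (Finset.sdiff_subset)
      have hKLS : K ∪ L ⊆ S := Finset.union_subset hKS hLS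
      have hdisj : Disjoint K L :=
        (Finset.disjoint_sdiff).mono_right hL
      have hnu2 : nuF C2 Q2 L = nuF C Q (K ∪ L) - nuF C Q K := by
        have hh : ∀ d : D, (if C2 d ⊆ L then Q2 d else 0)
            = (if C d ⊆ K ∪ L then Q d else 0) - (if C d ⊆ K then Q d else 0) := by
          intro d
          have hiff : C d \ K ⊆ L ↔ C d ⊆ K ∪ L := by
            constructor
            · intro hh x hx
              by_cases hxK : x ∈ K
              · exact Finset.mem_union_left _ hxK
              · exact Finset.mem_union_right _ (hh (Finset.mem_sdiff.mpr ⟨hx, hxK⟩))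
            · intro hh x hx
              rw [Finset.mem_sdiff] at hx
              rcases Finset.mem_union.mp (hh hx.1) with h | h
              · exact absurd h hx.2
              · exact h
          show (if (if C d ⊆ K then {s0} else C d \ K) ⊆ L
              then (if C d ⊆ K then 0 else Q d) else 0)
            = (if C d ⊆ K ∪ L then Q d else 0) - (if C d ⊆ K then Q d else 0)
          by_cases hd : C d ⊆ K
          · have hKL : C d ⊆ K ∪ L := hd.trans Finset.subset_union_left
            rw [if_pos hd, if_pos hd, if_pos hd, if_pos hKL]
            by_cases hs : ({s0} : Finset X) ⊆ L
            · rw [if_pos hs]; ring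
            · rw [if_neg hs]; ring
          · rw [if_neg hd, if_neg hd, if_neg hd]
            by_cases h2 : C d ⊆ K ∪ L
            · rw [if_pos (hiff.mpr h2), if_pos h2]; ring
            · rw [if_neg (fun hh2 => h2 (hiff.mp hh2)), if_neg h2]; ring
        calc nuF C2 Q2 L
            = ∑ d, ((if C d ⊆ K ∪ L then Q d else 0) - (if C d ⊆ K then Q d else 0)) :=
              Finset.sum_congr rfl (fun d _ => hh d)
          _ = nuF C Q (K ∪ L) - nuF C Q K := Finset.sum_sub_distrib _ _
      have hrhs : ∑ a ∈ L, lam2 a = ∑ a ∈ L, lam a := by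
        apply Finset.sum_congr rfl
        intro a ha
        show (if a ∈ S \ K then lam a else 0) = lam a
        rw [if_pos (hL ha)]
      have hunion : ∑ a ∈ K ∪ L, lam a = ∑ a ∈ K, lam a + ∑ a ∈ L, lam a :=
        Finset.sum_union hdisj
      have := hcut (K ∪ L) hKLS
      rw [hnu2, hrhs, htight]
      linarith
  -- solve the subproblems
  obtain ⟨ρ1, hρ1nn, hρ1supp, hρ1row, hρ1col⟩ := rec K C1 lam1 Q1 hcard1 hyp1
  obtain ⟨ρ2, hρ2nn, hρ2supp, hρ2row, hρ2col⟩ := rec (S \ K) C2 lam2 Q2 hcard2 hyp2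
  -- vanishing of rows with zero mass
  have hρ1zero : ∀ d, ¬ C d ⊆ K → ∀ a, ρ1 d a = 0 := by
    intro d hd a
    have : ∑ a, ρ1 d a = 0 := by rw [hρ1row d]; simp [hQ1def, hd]
    exact row_zero (hρ1nn d) this a
  have hρ2zero : ∀ d, C d ⊆ K → ∀ a, ρ2 d a = 0 := by
    intro d hd a
    have : ∑ a, ρ2 d a = 0 := by rw [hρ2row d]; simp [hQ2def, hd]
    exact row_zero (hρ2nn d) this a
  refine ⟨fun d a => ρ1 d a + ρ2 d a, ?_, ?_, ?_, ?_⟩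
  · intro d a
    exact add_nonneg (hρ1nn d a) (hρ2nn d a)
  · intro d a ha
    show ρ1 d a + ρ2 d a = 0
    by_cases hd : C d ⊆ K
    · have h1 : ρ1 d a = 0 := by
        apply hρ1supp d a
        show a ∉ (if C d ⊆ K then C d else {k0})
        rw [if_pos hd]
        exact ha
      have h2 : ρ2 d a = 0 := hρ2zero d hd a
      rw [h1, h2, add_zero]
    · have h1 : ρ1 d a = 0 := hρ1zero d hd a
      have h2 : ρ2 d a = 0 := by
        apply hρ2supp d a
        show a ∉ (if C d ⊆ K then {s0} else C d \ K)
        rw [if_neg hd]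
        intro haC
        exact ha (Finset.mem_sdiff.mp haC).1
      rw [h1, h2, add_zero]
  · intro d
    show (∑ a, (ρ1 d a + ρ2 d a)) = Q d
    rw [Finset.sum_add_distrib, hρ1row d, hρ2row d]
    show (if C d ⊆ K then Q d else 0) + (if C d ⊆ K then 0 else Q d) = Q d
    by_cases hd : C d ⊆ K
    · rw [if_pos hd, if_pos hd, add_zero]
    · rw [if_neg hd, if_neg hd, zero_add]
  · intro a
    show (∑ d, (ρ1 d a + ρ2 d a)) = lam a
    rw [Finset.sum_add_distrib, hρ1col a, hρ2col a]
    show (if a ∈ K then lam a else 0) + (if a ∈ S \ K then lam a else 0) = lam a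
    by_cases haK : a ∈ K
    · have haSK : a ∉ S \ K := fun hh => (Finset.mem_sdiff.mp hh).2 haK
      rw [if_pos haK, if_neg haSK, add_zero]
    · by_cases haS : a ∈ S
      · rw [if_neg haK, if_pos (Finset.mem_sdiff.mpr ⟨haS, haK⟩), zero_add]
      · have haSK : a ∉ S \ K := fun hh => haS (Finset.mem_sdiff.mp hh).1
        rw [if_neg haK, if_neg haSK, add_zero, hlamS a haS]

/-- Main feasibility lemma (Gale--Hoffman style), by strong induction. -/
lemma solve (m : ℕ) : ∀ (S : Finset X) (C : D → Finset X) (lam : X → ℝ) (Q : D → ℝ),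
    (Fintype.card D + 1) * S.card + (univ.filter fun d => Q d ≠ 0).card ≤ m →
    Hyp S C lam Q → Sol C lam Q := by
  induction m using Nat.strong_induction_on with
  | _ m IH =>
  intro S C lam Q hm h
  have hmS : (Fintype.card D + 1) * S.card ≤ m := le_trans (Nat.le_add_right _ _) hm
  obtain ⟨hCne, hCS, hlam0, hlamS, hQ0, htot, hcut⟩ := h
  by_cases hex : ∃ K, K ⊆ S ∧ K.Nonempty ∧ K ≠ S ∧ nuF C Q K = ∑ a ∈ K, lam a
  · obtain ⟨K, h1, h2, h3, h4⟩ := hex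
    refine split_step ?_ ⟨hCne, hCS, hlam0, hlamS, hQ0, htot, hcut⟩ h1 h2 h3 h4
    intro S' C' lam' Q' hlt h'
    exact IH ((Fintype.card D + 1) * S'.card + (univ.filter fun d => Q' d ≠ 0).card)
      (bound_lt (Finset.card_filter_le _ _) hlt hmS) S' C' lam' Q' le_rfl h'
  · push_neg at hex
    have hstrict : ∀ K, K ⊆ S → K.Nonempty → K ≠ S → nuF C Q K < ∑ a ∈ K, lam a :=
      fun K h1 h2 h3 => lt_of_le_of_ne (hcut K h1) (hex K h1 h2 h3)
    by_cases hQz : ∀ d, Q d = 0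
    · have hlamz : ∀ a, lam a = 0 := by
        have : ∑ a, lam a = 0 := by rw [htot]; exact Finset.sum_eq_zero fun d _ => hQz d
        exact row_zero hlam0 this
      exact ⟨fun _ _ => 0, fun _ _ => le_rfl, fun _ _ _ => rfl,
        fun d => by simp [hQz d], fun a => by simp [hlamz a]⟩
    · push_neg at hQz
      obtain ⟨d0, hd0⟩ := hQz
      have hQd0 : 0 < Q d0 := lt_of_le_of_ne (hQ0 d0) (Ne.symm hd0)
      obtain ⟨a0, ha0⟩ := hCne d0
      have ha0S : a0 ∈ S := hCS d0 ha0
      set KK : Finset (Finset X) :=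
        S.powerset.filter (fun K => a0 ∈ K ∧ ¬ C d0 ⊆ K) with hKKdef
      set slack : Finset X → ℝ := fun K => (∑ a ∈ K, lam a) - nuF C Q K with hslackdef
      have hKKprop : ∀ K ∈ KK, K ⊆ S ∧ a0 ∈ K ∧ ¬ C d0 ⊆ K := by
        intro K hK
        rw [hKKdef, Finset.mem_filter, Finset.mem_powerset] at hK
        exact ⟨hK.1, hK.2.1, hK.2.2⟩
      have hslackpos : ∀ K ∈ KK, 0 < slack K := by
        intro K hK
        obtain ⟨hKs, hKa0, hKC⟩ := hKKprop K hK
        have hKne : K.Nonempty := ⟨a0, hKa0⟩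
        have hKneS : K ≠ S := fun hh => hKC (hh ▸ hCS d0)
        have := hstrict K hKs hKne hKneS
        rw [hslackdef]; simp only; linarith
      set ε : ℝ := if hne : KK.Nonempty then min (Q d0) (KK.inf' hne slack) else Q d0
        with hεdef
      have hεQ : ε ≤ Q d0 := by
        rw [hεdef]
        split
        · exact min_le_left _ _
        · exact le_rfl
      have hεpos : 0 < ε := by
        rw [hεdef]
        split
        case isTrue hne =>
          exact lt_min hQd0 ((Finset.lt_inf'_iff hne).mpr fun K hK => hslackpos K hK)
        case isFalse => exact hQd0
      have hεslack : ∀ K ∈ KK, ε ≤ slack K := by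
        intro K hK
        rw [hεdef, dif_pos ⟨K, hK⟩]
        exact le_trans (min_le_right _ _) (Finset.inf'_le slack hK)
      -- ε ≤ lam a0
      have hεlam : ε ≤ lam a0 := by
        by_cases hsing : C d0 ⊆ {a0}
        · have h1 : Q d0 ≤ nuF C Q {a0} := by
            calc Q d0 = (if C d0 ⊆ ({a0} : Finset X) then Q d0 else 0) := by
                  rw [if_pos hsing]
              _ ≤ nuF C Q {a0} :=
                  Finset.single_le_sum
                    (f := fun d => if C d ⊆ ({a0} : Finset X) then Q d else 0)
                    (fun d _ => by
                      by_cases hd : C d ⊆ ({a0} : Finset X) <;> simp [hd, hQ0 d])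
                    (Finset.mem_univ d0)
          have h2 : nuF C Q {a0} ≤ ∑ a ∈ ({a0} : Finset X), lam a :=
            hcut {a0} (Finset.singleton_subset_iff.mpr ha0S)
          rw [Finset.sum_singleton] at h2
          linarith
        · have hmem : {a0} ∈ KK := by
            rw [hKKdef, Finset.mem_filter, Finset.mem_powerset]
            exact ⟨Finset.singleton_subset_iff.mpr ha0S, Finset.mem_singleton_self a0, hsing⟩
          have h1 := hεslack _ hmem
          have h2 : 0 ≤ nuF C Q {a0} := nuF_nonneg hQ0 _
          rw [hslackdef] at h1
          simp only [Finset.sum_singleton] at h1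
          linarith
      -- shifted problem
      set Q' : D → ℝ := fun d => Q d - (if d = d0 then ε else 0) with hQ'def
      set lam' : X → ℝ := fun a => lam a - (if a = a0 then ε else 0) with hlam'def
      have hnu' : ∀ K : Finset X,
          nuF C Q' K = nuF C Q K - (if C d0 ⊆ K then ε else 0) := by
        intro K
        have hh : ∀ d : D, (if C d ⊆ K then Q' d else 0)
            = (if C d ⊆ K then Q d else 0)
              - (if d = d0 then (if C d0 ⊆ K then ε else 0) else 0) := by
          intro d
          by_cases hd : d = d0
          · subst hd
            by_cases hKc : C d ⊆ K <;> simp [hQ'def, hKc]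
          · by_cases hKc : C d ⊆ K <;> simp [hQ'def, hd, hKc]
        calc nuF C Q' K
            = ∑ d, ((if C d ⊆ K then Q d else 0)
              - (if d = d0 then (if C d0 ⊆ K then ε else 0) else 0)) :=
              Finset.sum_congr rfl (fun d _ => hh d)
          _ = nuF C Q K - (if C d0 ⊆ K then ε else 0) := by
              rw [Finset.sum_sub_distrib,
                Finset.sum_ite_eq' univ d0 (fun _ => if C d0 ⊆ K then ε else 0),
                if_pos (Finset.mem_univ d0)]
              rfl
      have hlam'sum : ∀ K : Finset X,
          ∑ a ∈ K, lam' a = (∑ a ∈ K, lam a) - (if a0 ∈ K then ε else 0) := by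
        intro K
        rw [hlam'def]
        simp only
        rw [Finset.sum_sub_distrib, Finset.sum_ite_eq' K a0 (fun _ => ε)]
      have hyp' : Hyp S C lam' Q' := by
        refine ⟨hCne, hCS, ?_, ?_, ?_, ?_, ?_⟩
        · intro a
          rw [hlam'def]
          by_cases ha : a = a0
          · subst ha; simp; linarith
          · simp [ha]; exact hlam0 a
        · intro a ha
          have hne : a ≠ a0 := fun hh => ha (hh ▸ ha0S)
          rw [hlam'def]; simp [hne]; exact hlamS a ha
        · intro d
          rw [hQ'def]
          by_cases hd : d = d0
          · subst hd; simp; linarith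
          · simp [hd]; exact hQ0 d
        · have h1 : ∑ a, lam' a = ∑ a, lam a - ε := by
            have := hlam'sum univ
            rw [if_pos (Finset.mem_univ a0)] at this
            exact this
          have h2 : ∑ d, Q' d = ∑ d, Q d - ε := by
            rw [hQ'def]
            rw [Finset.sum_sub_distrib, Finset.sum_ite_eq' univ d0 (fun _ => ε),
              if_pos (Finset.mem_univ d0)]
          rw [h1, h2, htot]
        · intro K hK
          rw [hnu' K, hlam'sum K]
          by_cases h1 : C d0 ⊆ K
          · have ha0K : a0 ∈ K := h1 ha0
            rw [if_pos h1, if_pos ha0K]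
            linarith [hcut K hK]
          · rw [if_neg h1]
            by_cases h2 : a0 ∈ K
            · have hmem : K ∈ KK := by
                rw [hKKdef, Finset.mem_filter, Finset.mem_powerset]
                exact ⟨hK, h2, h1⟩
              have := hεslack K hmem
              rw [hslackdef] at this
              simp only at this
              rw [if_pos h2]
              linarith
            · rw [if_neg h2]
              linarith [hcut K hK]
      -- obtain a solution of the shifted problem
      have hsol' : Sol C lam' Q' := by
        by_cases hz : Q d0 - ε = 0
        · -- the count of nonzero Q's decreases
          have hd0f : d0 ∈ univ.filter (fun d => Q d ≠ 0) :=
            Finset.mem_filter.mpr ⟨Finset.mem_univ _, hd0⟩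
          have hfe : (univ.filter fun d => Q' d ≠ 0)
              = (univ.filter fun d => Q d ≠ 0).erase d0 := by
            ext d
            rw [Finset.mem_erase, Finset.mem_filter, Finset.mem_filter]
            constructor
            · intro ⟨_, hne⟩
              by_cases hd : d = d0
              · exfalso; apply hne; rw [hQ'def]; subst hd; simp [hz]
              · refine ⟨hd, Finset.mem_univ _, ?_⟩
                rw [hQ'def] at hne; simpa [hd] using hne
            · intro ⟨hd, _, hne⟩
              refine ⟨Finset.mem_univ _, ?_⟩
              rw [hQ'def]; simpa [hd] using hne
          have hcpos : 0 < (univ.filter fun d => Q d ≠ 0).card :=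
            Finset.card_pos.mpr ⟨d0, hd0f⟩
          refine IH ((Fintype.card D + 1) * S.card
              + ((univ.filter fun d => Q d ≠ 0).card - 1)) ?_ S C lam' Q' ?_ hyp'
          · have : (Fintype.card D + 1) * S.card
                + ((univ.filter fun d => Q d ≠ 0).card - 1)
                < (Fintype.card D + 1) * S.card
                + (univ.filter fun d => Q d ≠ 0).card := by omega
            exact lt_of_lt_of_le this hm
          · rw [hfe, Finset.card_erase_of_mem hd0f]
        · -- a tight set appears; split
          have hKKne : KK.Nonempty := by
            by_contra hcon
            apply hz
            have : ε = Q d0 := by rw [hεdef, dif_neg hcon]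
            rw [this]; ring
          have hεeq : ε = KK.inf' hKKne slack := by
            have hεlt : ε < Q d0 := lt_of_le_of_ne hεQ (fun hh => hz (by rw [hh]; ring))
            rw [hεdef, dif_pos hKKne] at hεlt ⊢
            rcases min_choice (Q d0) (KK.inf' hKKne slack) with hmin | hmin
            · exfalso; rw [hmin] at hεlt; exact lt_irrefl _ hεlt
            · exact hmin
          obtain ⟨Kstar, hKstarmem, hKstareq⟩ := Finset.exists_mem_eq_inf' hKKne slack
          obtain ⟨hKsS, hKsa0, hKsC⟩ := hKKprop Kstar hKstarmem
          have hKsne : Kstar.Nonempty := ⟨a0, hKsa0⟩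
          have hKsneS : Kstar ≠ S := fun hh => hKsC (hh ▸ hCS d0)
          have htight' : nuF C Q' Kstar = ∑ a ∈ Kstar, lam' a := by
            rw [hnu' Kstar, if_neg hKsC, hlam'sum Kstar, if_pos hKsa0]
            have : ε = slack Kstar := by rw [hεeq, hKstareq]
            rw [hslackdef] at this
            simp only at this
            linarith
          refine split_step ?_ hyp' hKsS hKsne hKsneS htight'
          intro S' C' l' Q'' hlt h'
          exact IH ((Fintype.card D + 1) * S'.card
              + (univ.filter fun d => Q'' d ≠ 0).card)
            (bound_lt (Finset.card_filter_le _ _) hlt hmS) S' C' l' Q'' le_rfl h'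
      -- add the shifted mass back
      obtain ⟨ρ', hρ'nn, hρ'supp, hρ'row, hρ'col⟩ := hsol'
      refine ⟨fun d a => ρ' d a + (if d = d0 ∧ a = a0 then ε else 0), ?_, ?_, ?_, ?_⟩
      · intro d a
        apply add_nonneg (hρ'nn d a)
        by_cases hh : d = d0 ∧ a = a0 <;> simp [hh, le_of_lt hεpos]
      · intro d a ha
        show ρ' d a + (if d = d0 ∧ a = a0 then ε else 0) = 0
        have h1 : ρ' d a = 0 := hρ'supp d a ha
        have h2 : ¬ (d = d0 ∧ a = a0) := by
          rintro ⟨hd, haa⟩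
          subst hd; subst haa
          exact ha ha0
        rw [h1, if_neg h2, add_zero]
      · intro d
        rw [Finset.sum_add_distrib, hρ'row d]
        have : (∑ a, if d = d0 ∧ a = a0 then ε else 0) = if d = d0 then ε else 0 := by
          by_cases hd : d = d0
          · subst hd
            simp [Finset.sum_ite_eq' univ a0 (fun _ => ε)]
          · simp [hd]
        rw [this, hQ'def]
        simp only
        ring
      · intro a
        rw [Finset.sum_add_distrib, hρ'col a]
        have : (∑ d, if d = d0 ∧ a = a0 then ε else 0) = if a = a0 then ε else 0 := by
          by_cases ha : a = a0
          · subst ha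
            simp [Finset.sum_ite_eq' univ d0 (fun _ => ε)]
          · simp [ha]
        rw [this, hlam'def]
        simp only
        ring

end AuxGale

/-- Complete-ignorance rationalizability characterization. -/
theorem stmt12 {D : Type*} [Fintype D] [DecidableEq D] (C : D → Finset X)
    (hC : ∀ d, (C d).Nonempty) (lam : X → ℝ) (hlam : IsProb lam)
    (Q : D → ℝ) (hQ : IsProb Q) :
    (∃ ρ : D → X → ℝ, (∀ d, IsProb (ρ d) ∧ ∀ a ∉ C d, ρ d a = 0) ∧
        ∀ a, lam a = ∑ d, Q d * ρ d a) ↔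
      ∀ K : Finset X,
        ∑ d ∈ Finset.univ.filter (fun d => C d ⊆ K), Q d ≤ mass lam K := by
  classical
  constructor
  · rintro ⟨ρ, hρ, hmix⟩ K
    have hrow : ∀ d, C d ⊆ K → ∑ a ∈ K, ρ d a = 1 := by
      intro d hdK
      rw [Finset.sum_subset (Finset.subset_univ K)
        (fun a _ haK => (hρ d).2 a (fun haC => haK (hdK haC)))]
      exact (hρ d).1.2
    calc ∑ d ∈ Finset.univ.filter (fun d => C d ⊆ K), Q d
        = ∑ d ∈ Finset.univ.filter (fun d => C d ⊆ K), Q d * ∑ a ∈ K, ρ d a := by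
          apply Finset.sum_congr rfl
          intro d hd
          rw [hrow d (Finset.mem_filter.mp hd).2, mul_one]
      _ ≤ ∑ d, Q d * ∑ a ∈ K, ρ d a := by
          apply Finset.sum_le_sum_of_subset_of_nonneg (Finset.filter_subset _ _)
          intro d _ _
          exact mul_nonneg (hQ.1 d) (Finset.sum_nonneg fun a _ => (hρ d).1.1 a)
      _ = mass lam K := by
          rw [mass]
          simp_rw [hmix, Finset.mul_sum]
          rw [Finset.sum_comm]
  · intro hcut
    have hyp : Hyp Finset.univ C lam Q := by
      refine ⟨hC, fun d => Finset.subset_univ _, hlam.1,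
        fun a ha => absurd (Finset.mem_univ a) ha, hQ.1, by rw [hlam.2, hQ.2], ?_⟩
      intro K _
      have : nuF C Q K = ∑ d ∈ Finset.univ.filter (fun d => C d ⊆ K), Q d := by
        rw [nuF, Finset.sum_filter]
      rw [this]
      exact hcut K
    obtain ⟨ρ, hρnn, hρsupp, hρrow, hρcol⟩ :=
      solve ((Fintype.card D + 1) * (Finset.univ : Finset X).card
        + (Finset.univ.filter fun d => Q d ≠ 0).card) Finset.univ C lam Q le_rfl hyp
    have hzero : ∀ d, Q d = 0 → ∀ a, ρ d a = 0 := by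
      intro d hd a
      have : ∑ a, ρ d a = 0 := by rw [hρrow d, hd]
      exact row_zero (hρnn d) this a
    refine ⟨fun d => if Q d = 0 then (fun a => if a = (hC d).choose then 1 else 0)
      else (fun a => ρ d a / Q d), ?_, ?_⟩
    · intro d
      by_cases hq : Q d = 0
      · simp only [if_pos hq]
        refine ⟨⟨?_, ?_⟩, ?_⟩
        · intro a
          by_cases ha : a = (hC d).choose <;> simp [ha]
        · rw [Finset.sum_ite_eq' Finset.univ ((hC d).choose) (fun _ => (1:ℝ))]
          simp
        · intro a ha
          have : a ≠ (hC d).choose := fun hh => ha (hh ▸ (hC d).choose_spec)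
          simp [this]
      · simp only [if_neg hq]
        refine ⟨⟨?_, ?_⟩, ?_⟩
        · intro a
          exact div_nonneg (hρnn d a) (hQ.1 d)
        · rw [← Finset.sum_div, hρrow d, div_self hq]
        · intro a ha
          rw [hρsupp d a ha, zero_div]
    · intro a
      rw [← hρcol a]
      apply Finset.sum_congr rfl
      intro d _
      by_cases hq : Q d = 0
      · simp only [if_pos hq]
        rw [hq, hzero d hq a, zero_mul]
      · simp only [if_neg hq]
        field_simp
end

section
/- In the updating model, suppose Q with average bias κ_Q ∈ [0,1] rationalizes λ, and there exists K* ⊆ X with λ(K*) < ν(K*−{x⁰}). Then: if x⁰ ∉ K*, κ_Q > 0 (underreaction on average); and if x⁰ ∈ K*, κ_Q < 0 (overreaction on average) — hence in the constrained case κ_Q ∈ [0,1], no rationalization with x⁰ ∈ K* exists. Moreover, if such sets K¹ (with x⁰ ∉ K¹) and K² (with x⁰ ∈ K²) both exist, then no average bias κ_Q rationalizes λ. -/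
open Finset

variable {X : Type*} [Fintype X] [DecidableEq X]

/-- Rationalization of λ by the average bias κ. -/
def RatBias {G : Type*} [AddCommGroup G] [Fintype G] [DecidableEq G]
    (x0 : G) (ν : Finset G → ℝ) (lam : G → ℝ) (κ : ℝ) : Prop :=
  ∀ K : Finset G,
    (1 - κ) * ν (K.image (fun x => x - x0)) + κ * (if x0 ∈ K then 1 else 0) ≤
      mass lam K

/-- Under/overreaction on average: if λ(K*) < ν(K*−{x⁰}) then any rationalizing
average bias is positive when x⁰ ∉ K* and negative when x⁰ ∈ K*; if both kinds of
witnesses exist, no average bias rationalizes λ. -/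
theorem stmt18 {G : Type*} [AddCommGroup G] [Fintype G] [DecidableEq G]
    (x0 : G) (ν : Finset G → ℝ) (hν : IsConvexCap ν)
    (lam : G → ℝ) (hlam : IsProb lam) :
    (∀ Kstar : Finset G, mass lam Kstar < ν (Kstar.image (fun x => x - x0)) →
      (x0 ∉ Kstar → ∀ κ : ℝ, RatBias x0 ν lam κ → 0 < κ) ∧
      (x0 ∈ Kstar → ∀ κ : ℝ, RatBias x0 ν lam κ → κ < 0)) ∧
    (∀ K1 K2 : Finset G,
      mass lam K1 < ν (K1.image (fun x => x - x0)) →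
      mass lam K2 < ν (K2.image (fun x => x - x0)) →
      x0 ∉ K1 → x0 ∈ K2 → ∀ κ : ℝ, ¬ RatBias x0 ν lam κ) := by
  have hmono := hν.1.2.2
  have huniv := hν.1.2.1
  have hmassnn : ∀ K : Finset G, (0:ℝ) ≤ mass lam K := fun K =>
    Finset.sum_nonneg (fun a _ => hlam.1 a)
  have hνle1 : ∀ K : Finset G, ν K ≤ 1 := fun K => by
    calc ν K ≤ ν Finset.univ := hmono (Finset.subset_univ K)
    _ = 1 := huniv
  have main : ∀ Kstar : Finset G, mass lam Kstar < ν (Kstar.image (fun x => x - x0)) →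
      (x0 ∉ Kstar → ∀ κ : ℝ, RatBias x0 ν lam κ → 0 < κ) ∧
      (x0 ∈ Kstar → ∀ κ : ℝ, RatBias x0 ν lam κ → κ < 0) := by
    intro K hK
    set A := K.image (fun x => x - x0) with hA
    constructor
    · intro hx κ hrat
      have h := hrat K
      rw [if_neg hx] at h
      have hν0 : 0 < ν A := lt_of_le_of_lt (hmassnn K) hK
      nlinarith [h, hK]
    · intro hx κ hrat
      have h := hrat K
      rw [if_pos hx] at h
      have hν1 : ν A ≤ 1 := hνle1 A
      -- (1-κ)νA + κ ≤ λ < νA ⇒ κ(1-νA) < 0 with 1-νA ≥ 0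
      rcases lt_or_eq_of_le hν1 with hlt | heq
      · nlinarith [h, hK]
      · nlinarith [h, hK, hmassnn K]
  refine ⟨main, ?_⟩
  intro K1 K2 h1 h2 hx1 hx2 κ hrat
  have hp := (main K1 h1).1 hx1 κ hrat
  have hn := (main K2 h2).2 hx2 κ hrat
  linarith
end
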